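/- arXiv:1203.4451 — 7 statements merged into one kernel-verified Lean document; each statement's English description precedes it below -/
import Mathlib

section
/- Assume the fixed-point system admits a solution (û, ŵ, v̂, ẑ). Then for any starting point (u⁰, w⁰, v⁰, z⁰), the sequence (uⁿ, wⁿ, vⁿ, zⁿ) generated by the GBPDNA iteration converges to some fixed point (u†, w†, v†, z†) of the iteration, and u† is a minimizer of ‖Au‖₁ over the set {u ∈ ℝ^N : ‖Ku − y‖ ≤ ε}. -/
open scoped RealInnerProductSpace
open Filter Topology

/-- Componentwise projection `P_λ` on `(ℝ^d)^p`. -/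
noncomputable def Pproj {d p : ℕ} (lam : ℝ)
    (w : PiLp 2 (fun _ : Fin p => EuclideanSpace ℝ (Fin d))) :
    PiLp 2 (fun _ : Fin p => EuclideanSpace ℝ (Fin d)) :=
  WithLp.toLp 2 (fun i => if lam < ‖w i‖ then (lam / ‖w i‖) • w i else w i)

/-- Projection onto the closed `ℓ₂`-ball of radius `ε` centered at `y`. -/
noncomputable def Qproj {m : ℕ} (y : EuclideanSpace ℝ (Fin m)) (eps : ℝ)
    (v : EuclideanSpace ℝ (Fin m)) : EuclideanSpace ℝ (Fin m) :=
  if eps < ‖v - y‖ then y + (eps / ‖v - y‖) • (v - y) else v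

section bp
variable {F : Type*} [NormedAddCommGroup F] [InnerProductSpace ℝ F]

noncomputable def bp (y : F) (eps : ℝ) (v : F) : F :=
  if eps < ‖v - y‖ then y + (eps / ‖v - y‖) • (v - y) else v

lemma bp_mem (y : F) {eps : ℝ} (heps : 0 ≤ eps) (v : F) : ‖bp y eps v - y‖ ≤ eps := by
  unfold bp; split_ifs with h
  · rw [add_sub_cancel_left, norm_smul, Real.norm_eq_abs, abs_div, abs_of_nonneg heps,
      abs_of_nonneg (norm_nonneg _), div_mul_cancel₀]
    exact ne_of_gt (lt_of_le_of_lt heps h)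
  · linarith [not_lt.mp h]

lemma bp_var (y : F) {eps : ℝ} (heps : 0 ≤ eps) (v : F) {c : F} (hc : ‖c - y‖ ≤ eps) :
    ⟪v - bp y eps v, c - bp y eps v⟫ ≤ 0 := by
  unfold bp; split_ifs with h
  · have hr : (0:ℝ) < ‖v - y‖ := lt_of_le_of_lt heps h
    have hv : v - (y + (eps / ‖v - y‖) • (v - y)) = (1 - eps / ‖v - y‖) • (v - y) := by
      rw [sub_smul, one_smul]; abel
    have hcq : c - (y + (eps / ‖v - y‖) • (v - y)) = (c - y) - (eps / ‖v - y‖) • (v - y) := by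
      abel
    rw [hv, hcq, real_inner_smul_left, inner_sub_right, real_inner_smul_right,
      real_inner_self_eq_norm_sq]
    have h1 : ⟪v - y, c - y⟫ ≤ ‖v - y‖ * eps := by
      calc ⟪v - y, c - y⟫ ≤ ‖v - y‖ * ‖c - y‖ := real_inner_le_norm _ _
      _ ≤ ‖v - y‖ * eps := by nlinarith
    have h2 : (0:ℝ) ≤ 1 - eps / ‖v - y‖ := by
      rw [sub_nonneg, div_le_one hr]; exact h.le
    have h3 : eps / ‖v - y‖ * ‖v - y‖ ^ 2 = eps * ‖v - y‖ := by
      field_simp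
    nlinarith
  · simp

lemma bp_firm (y : F) {eps : ℝ} (heps : 0 ≤ eps) (v₁ v₂ : F) :
    ⟪bp y eps v₁ - bp y eps v₂ - (v₁ - v₂), bp y eps v₁ - bp y eps v₂⟫ ≤ 0 := by
  have h1 := bp_var y heps v₁ (bp_mem y heps v₂)
  have h2 := bp_var y heps v₂ (bp_mem y heps v₁)
  have e : bp y eps v₁ - bp y eps v₂ - (v₁ - v₂)
      = -((v₁ - bp y eps v₁) - (v₂ - bp y eps v₂)) := by abel
  rw [e, inner_neg_left, inner_sub_left]
  have e2 : ⟪v₁ - bp y eps v₁, bp y eps v₁ - bp y eps v₂⟫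
      = -⟪v₁ - bp y eps v₁, bp y eps v₂ - bp y eps v₁⟫ := by
    rw [← inner_neg_right]; congr 1; abel
  linarith [h1, h2, e2]

lemma firm_norm_le {P₁ P₂ x₁ x₂ : F} (h : ⟪P₁ - P₂ - (x₁ - x₂), P₁ - P₂⟫ ≤ 0) :
    ‖P₁ - P₂‖ ≤ ‖x₁ - x₂‖ := by
  rw [inner_sub_left, real_inner_self_eq_norm_sq] at h
  have h2 : ⟪x₁ - x₂, P₁ - P₂⟫ ≤ ‖x₁ - x₂‖ * ‖P₁ - P₂‖ := real_inner_le_norm _ _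
  by_contra hc
  push_neg at hc
  nlinarith [norm_nonneg (P₁ - P₂), norm_nonneg (x₁ - x₂)]

lemma bp_lip (y : F) {eps : ℝ} (heps : 0 ≤ eps) (v₁ v₂ : F) :
    ‖bp y eps v₁ - bp y eps v₂‖ ≤ ‖v₁ - v₂‖ :=
  firm_norm_le (bp_firm y heps v₁ v₂)

lemma bp_continuous (y : F) {eps : ℝ} (heps : 0 ≤ eps) : Continuous (bp y eps) := by
  refine (LipschitzWith.of_dist_le_mul (K := 1) fun a b => ?_).continuous
  rw [dist_eq_norm, dist_eq_norm, NNReal.coe_one, one_mul]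
  exact bp_lip y heps a b

end bp

section proj
variable {N m p d : ℕ}

lemma Qproj_eq_bp (y : EuclideanSpace ℝ (Fin m)) (eps : ℝ) :
    Qproj y eps = bp y eps := rfl

lemma Pproj_apply_eq {mu : ℝ} (w : PiLp 2 (fun _ : Fin p => EuclideanSpace ℝ (Fin d)))
    (i : Fin p) : Pproj mu w i = bp 0 mu (w i) := by
  simp [Pproj, bp]

lemma Pproj_firm {mu : ℝ} (hmu : 0 ≤ mu)
    (w₁ w₂ : PiLp 2 (fun _ : Fin p => EuclideanSpace ℝ (Fin d))) :
    ⟪Pproj mu w₁ - Pproj mu w₂ - (w₁ - w₂), Pproj mu w₁ - Pproj mu w₂⟫ ≤ 0 := by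
  rw [PiLp.inner_apply]
  refine Finset.sum_nonpos fun i _ => ?_
  have : ∀ j, (Pproj mu w₁ - Pproj mu w₂ - (w₁ - w₂)) j
      = bp 0 mu (w₁ j) - bp 0 mu (w₂ j) - (w₁ j - w₂ j) := by
    intro j; simp [Pproj_apply_eq]
  rw [this i]
  have : ∀ j, (Pproj mu w₁ - Pproj mu w₂) j = bp 0 mu (w₁ j) - bp 0 mu (w₂ j) := by
    intro j; simp [Pproj_apply_eq]
  rw [this i]
  exact bp_firm 0 hmu (w₁ i) (w₂ i)

lemma Pproj_lip {mu : ℝ} (hmu : 0 ≤ mu)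
    (w₁ w₂ : PiLp 2 (fun _ : Fin p => EuclideanSpace ℝ (Fin d))) :
    ‖Pproj mu w₁ - Pproj mu w₂‖ ≤ ‖w₁ - w₂‖ :=
  firm_norm_le (Pproj_firm hmu w₁ w₂)

lemma Pproj_continuous {mu : ℝ} (hmu : 0 ≤ mu) :
    Continuous (Pproj (d := d) (p := p) mu) := by
  refine (LipschitzWith.of_dist_le_mul (K := 1) fun a b => ?_).continuous
  rw [dist_eq_norm, dist_eq_norm, NNReal.coe_one, one_mul]
  exact Pproj_lip hmu a b

lemma Pproj_block_mem {mu : ℝ} (hmu : 0 ≤ mu)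
    (w : PiLp 2 (fun _ : Fin p => EuclideanSpace ℝ (Fin d))) (i : Fin p) :
    ‖Pproj mu w i‖ ≤ mu := by
  have := bp_mem (0 : EuclideanSpace ℝ (Fin d)) hmu (w i)
  rwa [sub_zero, ← Pproj_apply_eq] at this

end proj

section key
variable {N m p d : ℕ}

noncomputable def aseq (K : EuclideanSpace ℝ (Fin N) →L[ℝ] EuclideanSpace ℝ (Fin m))
    (u : ℕ → EuclideanSpace ℝ (Fin N)) (z : ℕ → EuclideanSpace ℝ (Fin m)) :
    ℕ → EuclideanSpace ℝ (Fin m) :=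
  fun n => K (u (n + 1)) - z (n + 1)

noncomputable def Phi (K : EuclideanSpace ℝ (Fin N) →L[ℝ] EuclideanSpace ℝ (Fin m))
    (A : EuclideanSpace ℝ (Fin N) →L[ℝ] PiLp 2 (fun _ : Fin p => EuclideanSpace ℝ (Fin d)))
    (u : ℕ → EuclideanSpace ℝ (Fin N))
    (w : ℕ → PiLp 2 (fun _ : Fin p => EuclideanSpace ℝ (Fin d)))
    (v z : ℕ → EuclideanSpace ℝ (Fin m))
    (uh : EuclideanSpace ℝ (Fin N))
    (wh : PiLp 2 (fun _ : Fin p => EuclideanSpace ℝ (Fin d)))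
    (vh : EuclideanSpace ℝ (Fin m)) (θ c : ℝ) : ℕ → ℝ :=
  fun n => ‖u n - uh‖ ^ 2 + ‖w n - wh‖ ^ 2 - ‖A.adjoint (w n - wh)‖ ^ 2
    + θ⁻¹ * ‖v n - vh‖ ^ 2 - 2 * ⟪K (u n - uh), aseq K u z (n - 1)⟫
    + c * ‖aseq K u z (n - 1)‖ ^ 2

set_option maxHeartbeats 1600000 in
theorem key_step
    (K : EuclideanSpace ℝ (Fin N) →L[ℝ] EuclideanSpace ℝ (Fin m))
    (A : EuclideanSpace ℝ (Fin N) →L[ℝ] PiLp 2 (fun _ : Fin p => EuclideanSpace ℝ (Fin d)))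
    (y : EuclideanSpace ℝ (Fin m)) {eps : ℝ} (heps : 0 ≤ eps) {mu : ℝ} (hmu : 0 ≤ mu)
    {θ : ℝ} (hθ0 : 0 < θ)
    (u ubar : ℕ → EuclideanSpace ℝ (Fin N))
    (w : ℕ → PiLp 2 (fun _ : Fin p => EuclideanSpace ℝ (Fin d)))
    (v z : ℕ → EuclideanSpace ℝ (Fin m))
    (hubar : ∀ n, ubar (n + 1) = u n - K.adjoint (v n + K (u n) - z n) - A.adjoint (w n))
    (hw : ∀ n, w (n + 1) = Pproj mu (w n + A (ubar (n + 1))))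
    (hu : ∀ n, u (n + 1) = u n - K.adjoint (v n + K (u n) - z n) - A.adjoint (w (n + 1)))
    (hz : ∀ n, z (n + 1) = Qproj y eps (K (u (n + 1)) + v n))
    (hv : ∀ n, v (n + 1) = v n + θ • (K (u (n + 1)) - z (n + 1)))
    (uh : EuclideanSpace ℝ (Fin N))
    (wh : PiLp 2 (fun _ : Fin p => EuclideanSpace ℝ (Fin d)))
    (vh zh : EuclideanSpace ℝ (Fin m))
    (hfw : wh = Pproj mu (wh + A uh))
    (hfu : K.adjoint (vh + K uh - zh) + A.adjoint wh = 0)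
    (hfz : zh = Qproj y eps (K uh + vh))
    (hfv : K uh = zh)
    {t c : ℝ} (ht0 : 0 < t) (n : ℕ) :
    Phi K A u w v z uh wh vh θ c (n + 2)
      + (1 - ‖K‖ ^ 2 * t⁻¹) * ‖u (n + 2) - u (n + 1)‖ ^ 2
      + (1 - ‖A‖ ^ 2) * ‖w (n + 2) - w (n + 1)‖ ^ 2
      + (c - t) * ‖aseq K u z n‖ ^ 2
      + (2 - θ - c) * ‖aseq K u z (n + 1)‖ ^ 2
    ≤ Phi K A u w v z uh wh vh θ c (n + 1) := by
  have hKA : K.adjoint vh + A.adjoint wh = 0 := by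
    have e : vh + K uh - zh = vh := by rw [hfv]; abel
    rwa [e] at hfu
  have hwh : A.adjoint wh = -(K.adjoint vh) := by
    rw [eq_neg_iff_add_eq_zero, add_comm]; exact hKA
  have ha0 : aseq K u z n = K (u (n + 1)) - z (n + 1) := rfl
  have ha1 : aseq K u z (n + 1) = K (u (n + 2)) - z (n + 2) := rfl
  -- F1
  have F1 : u (n + 2) - u (n + 1)
      = -(K.adjoint ((v (n + 1) - vh) + aseq K u z n)) - A.adjoint (w (n + 2) - wh) := by
    have e0 : v (n + 1) + K (u (n + 1)) - z (n + 1)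
        = ((v (n + 1) - vh) + aseq K u z n) + vh := by rw [ha0]; abel
    rw [hu (n + 1), e0, map_add, map_sub, hwh]; abel
  -- F2
  have F2 : ubar (n + 2) - uh = (u (n + 2) - uh) + A.adjoint (w (n + 2) - w (n + 1)) := by
    have ms : A.adjoint (w (n + 2) - w (n + 1))
        = A.adjoint (w (n + 2)) - A.adjoint (w (n + 1)) := map_sub _ _ _
    rw [hubar (n + 1), hu (n + 1), ms]; abel
  -- F3 : W-inequality
  have F3 : ⟪(w (n + 2) - wh) - (w (n + 1) - wh) - A (ubar (n + 2) - uh),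
      w (n + 2) - wh⟫ ≤ 0 := by
    have h := Pproj_firm hmu (w (n + 1) + A (ubar (n + 2))) (wh + A uh)
    rw [← hw (n + 1), ← hfw] at h
    have e : w (n + 2) - wh - (w (n + 1) + A (ubar (n + 2)) - (wh + A uh))
        = (w (n + 2) - wh) - (w (n + 1) - wh) - A (ubar (n + 2) - uh) := by
      rw [map_sub]; abel
    rwa [e] at h
  -- F4 : Z-inequality
  have F4 : ⟪(K (u (n + 2) - uh) - aseq K u z (n + 1))
        - ((K (u (n + 2) - uh)) + (v (n + 1) - vh)),
      K (u (n + 2) - uh) - aseq K u z (n + 1)⟫ ≤ 0 := by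
    have hzq : z (n + 2) = bp y eps (K (u (n + 2)) + v (n + 1)) := by
      rw [hz (n + 1), Qproj_eq_bp]
    have hfz' : zh = bp y eps (K uh + vh) := by rw [hfz, Qproj_eq_bp]
    have h := bp_firm y heps (K (u (n + 2)) + v (n + 1)) (K uh + vh)
    rw [← hzq, ← hfz'] at h
    have e1 : z (n + 2) - zh = K (u (n + 2) - uh) - aseq K u z (n + 1) := by
      rw [ha1, map_sub, ← hfv]; abel
    have e2 : z (n + 2) - zh - (K (u (n + 2)) + v (n + 1) - (K uh + vh))
        = (K (u (n + 2) - uh) - aseq K u z (n + 1))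
          - ((K (u (n + 2) - uh)) + (v (n + 1) - vh)) := by
      rw [← e1, map_sub]; abel
    rwa [e2, e1] at h
  -- F5
  have F5 : v (n + 2) - vh = (v (n + 1) - vh) + θ • aseq K u z (n + 1) := by
    rw [ha1, hv (n + 1)]; abel
  -- scalar facts
  have s1 : ‖u (n + 1) - uh‖ ^ 2 = ‖u (n + 2) - uh‖ ^ 2
      - 2 * ⟪u (n + 2) - uh, u (n + 2) - u (n + 1)⟫ + ‖u (n + 2) - u (n + 1)‖ ^ 2 := by
    have h := norm_sub_sq_real (u (n + 2) - uh) (u (n + 2) - u (n + 1))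
    have e : u (n + 2) - uh - (u (n + 2) - u (n + 1)) = u (n + 1) - uh := by abel
    rw [e] at h
    linarith [h]
  have s2 : ⟪u (n + 2) - uh, u (n + 2) - u (n + 1)⟫
      = -(⟪K (u (n + 2) - uh), v (n + 1) - vh⟫ + ⟪K (u (n + 2) - uh), aseq K u z n⟫)
        - ⟪A (u (n + 2) - uh), w (n + 2) - wh⟫ := by
    rw [F1, inner_sub_right, inner_neg_right, ContinuousLinearMap.adjoint_inner_right,
      ContinuousLinearMap.adjoint_inner_right, inner_add_right]
  have s7 : ‖w (n + 1) - wh‖ ^ 2 = ‖w (n + 2) - wh‖ ^ 2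
      - 2 * ⟪w (n + 2) - wh, (w (n + 2) - wh) - (w (n + 1) - wh)⟫
      + ‖(w (n + 2) - wh) - (w (n + 1) - wh)‖ ^ 2 := by
    have h := norm_sub_sq_real (w (n + 2) - wh) ((w (n + 2) - wh) - (w (n + 1) - wh))
    have e : (w (n + 2) - wh) - ((w (n + 2) - wh) - (w (n + 1) - wh)) = w (n + 1) - wh := by
      abel
    rw [e] at h; linarith [h]
  have s6 : ⟪w (n + 2) - wh, (w (n + 2) - wh) - (w (n + 1) - wh)⟫
      ≤ ⟪A (u (n + 2) - uh), w (n + 2) - wh⟫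
        + ⟪A.adjoint ((w (n + 2) - wh) - (w (n + 1) - wh)),
            A.adjoint (w (n + 2) - wh)⟫ := by
    have h := F3
    rw [inner_sub_left, F2, map_add, inner_add_left, sub_nonpos] at h
    have e3 : A (A.adjoint (w (n + 2) - w (n + 1))) = A (A.adjoint ((w (n+2) - wh) - (w (n+1) - wh))) := by
      congr 1; congr 1; abel
    rw [e3] at h
    have e4 : ⟪A (A.adjoint ((w (n+2) - wh) - (w (n+1) - wh))), w (n + 2) - wh⟫
        = ⟪A.adjoint ((w (n + 2) - wh) - (w (n + 1) - wh)), A.adjoint (w (n + 2) - wh)⟫ := by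
      exact (ContinuousLinearMap.adjoint_inner_right A _ _).symm
    rw [e4] at h
    calc ⟪w (n + 2) - wh, (w (n + 2) - wh) - (w (n + 1) - wh)⟫
        = ⟪(w (n + 2) - wh) - (w (n + 1) - wh), w (n + 2) - wh⟫ := real_inner_comm _ _
      _ ≤ _ := h
  have s3 : ‖A.adjoint (w (n + 1) - wh)‖ ^ 2 = ‖A.adjoint (w (n + 2) - wh)‖ ^ 2
      - 2 * ⟪A.adjoint ((w (n + 2) - wh) - (w (n + 1) - wh)), A.adjoint (w (n + 2) - wh)⟫
      + ‖A.adjoint ((w (n + 2) - wh) - (w (n + 1) - wh))‖ ^ 2 := by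
    have h := norm_sub_sq_real (A.adjoint (w (n + 2) - wh))
      (A.adjoint ((w (n + 2) - wh) - (w (n + 1) - wh)))
    rw [← map_sub] at h
    have e : (w (n + 2) - wh) - ((w (n + 2) - wh) - (w (n + 1) - wh)) = w (n + 1) - wh := by
      abel
    rw [e] at h
    rw [h, real_inner_comm]
  have s4 : θ⁻¹ * ‖v (n + 2) - vh‖ ^ 2 = θ⁻¹ * ‖v (n + 1) - vh‖ ^ 2
      + 2 * ⟪v (n + 1) - vh, aseq K u z (n + 1)⟫ + θ * ‖aseq K u z (n + 1)‖ ^ 2 := by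
    rw [F5, norm_add_sq_real, real_inner_smul_right, norm_smul, Real.norm_eq_abs,
      abs_of_pos hθ0, mul_pow]
    field_simp
  have s5 : ⟪K (u (n + 2) - uh), aseq K u z (n + 1)⟫ - ‖aseq K u z (n + 1)‖ ^ 2
      + ⟪K (u (n + 2) - uh), v (n + 1) - vh⟫ - ⟪v (n + 1) - vh, aseq K u z (n + 1)⟫ ≥ 0 := by
    have h := F4
    have e : (K (u (n + 2) - uh) - aseq K u z (n + 1))
        - ((K (u (n + 2) - uh)) + (v (n + 1) - vh))
        = -(aseq K u z (n + 1) + (v (n + 1) - vh)) := by abel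
    rw [e, inner_neg_left, neg_nonpos, inner_add_left, inner_sub_right, inner_sub_right,
      real_inner_self_eq_norm_sq] at h
    have c1 : ⟪aseq K u z (n + 1), K (u (n + 2) - uh)⟫
        = ⟪K (u (n + 2) - uh), aseq K u z (n + 1)⟫ := real_inner_comm _ _
    have c2 : ⟪v (n + 1) - vh, K (u (n + 2) - uh)⟫
        = ⟪K (u (n + 2) - uh), v (n + 1) - vh⟫ := real_inner_comm _ _
    linarith [h]
  -- Cauchy–Schwarz style bounds
  have cs1 : ‖A.adjoint ((w (n + 2) - wh) - (w (n + 1) - wh))‖ ^ 2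
      ≤ ‖A‖ ^ 2 * ‖w (n + 2) - w (n + 1)‖ ^ 2 := by
    have e : (w (n + 2) - wh) - (w (n + 1) - wh) = w (n + 2) - w (n + 1) := by abel
    rw [e]
    have h := A.adjoint.le_opNorm (w (n + 2) - w (n + 1))
    rw [LinearIsometryEquiv.norm_map ContinuousLinearMap.adjoint A] at h
    nlinarith [norm_nonneg (A.adjoint (w (n + 2) - w (n + 1))), norm_nonneg A,
      norm_nonneg (w (n + 2) - w (n + 1))]
  have cs2 : ‖K (u (n + 2) - u (n + 1))‖ ^ 2 ≤ ‖K‖ ^ 2 * ‖u (n + 2) - u (n + 1)‖ ^ 2 := by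
    have h := K.le_opNorm (u (n + 2) - u (n + 1))
    nlinarith [norm_nonneg (K (u (n + 2) - u (n + 1))), norm_nonneg K,
      norm_nonneg (u (n + 2) - u (n + 1))]
  have s9 : ⟪K (u (n + 2) - uh), aseq K u z n⟫ - ⟪K (u (n + 1) - uh), aseq K u z n⟫
      = ⟪K (u (n + 2) - u (n + 1)), aseq K u z n⟫ := by
    rw [← inner_sub_left, ← map_sub]
    congr 2
    abel
  have cs3 : -(2 * ⟪K (u (n + 2) - u (n + 1)), aseq K u z n⟫)
      ≤ t * ‖aseq K u z n‖ ^ 2 + t⁻¹ * ‖K (u (n + 2) - u (n + 1))‖ ^ 2 := by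
    have habs : |⟪K (u (n + 2) - u (n + 1)), aseq K u z n⟫|
        ≤ ‖K (u (n + 2) - u (n + 1))‖ * ‖aseq K u z n‖ := abs_real_inner_le_norm _ _
    have expand : t * ‖aseq K u z n‖ ^ 2 + t⁻¹ * ‖K (u (n + 2) - u (n + 1))‖ ^ 2
        - 2 * (‖K (u (n + 2) - u (n + 1))‖ * ‖aseq K u z n‖)
        = t⁻¹ * (t * ‖aseq K u z n‖ - ‖K (u (n + 2) - u (n + 1))‖) ^ 2 := by
      field_simp; ring
    have hnn : 0 ≤ t⁻¹ * (t * ‖aseq K u z n‖ - ‖K (u (n + 2) - u (n + 1))‖) ^ 2 := by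
      positivity
    have := abs_le.mp habs
    linarith [this.1, this.2]
  have cs2' : t⁻¹ * ‖K (u (n + 2) - u (n + 1))‖ ^ 2
      ≤ t⁻¹ * (‖K‖ ^ 2 * ‖u (n + 2) - u (n + 1)‖ ^ 2) := by
    apply mul_le_mul_of_nonneg_left cs2 (by positivity)
  -- unfold Phi
  have hP1 : Phi K A u w v z uh wh vh θ c (n + 1)
      = ‖u (n + 1) - uh‖ ^ 2 + ‖w (n + 1) - wh‖ ^ 2 - ‖A.adjoint (w (n + 1) - wh)‖ ^ 2
        + θ⁻¹ * ‖v (n + 1) - vh‖ ^ 2 - 2 * ⟪K (u (n + 1) - uh), aseq K u z n⟫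
        + c * ‖aseq K u z n‖ ^ 2 := by
    simp only [Phi, show n + 1 - 1 = n from rfl]
  have hP2 : Phi K A u w v z uh wh vh θ c (n + 2)
      = ‖u (n + 2) - uh‖ ^ 2 + ‖w (n + 2) - wh‖ ^ 2 - ‖A.adjoint (w (n + 2) - wh)‖ ^ 2
        + θ⁻¹ * ‖v (n + 2) - vh‖ ^ 2 - 2 * ⟪K (u (n + 2) - uh), aseq K u z (n + 1)⟫
        + c * ‖aseq K u z (n + 1)‖ ^ 2 := by
    simp only [Phi, show n + 2 - 1 = n + 1 from rfl]
  -- difference of norms of iterates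
  have hdw2 : ‖(w (n + 2) - wh) - (w (n + 1) - wh)‖ ^ 2 = ‖w (n + 2) - w (n + 1)‖ ^ 2 := by
    congr 2; abel
  rw [hP1, hP2]
  linarith [s1, s2, s3, s4, s5, s6, s7, s9, cs1, cs2', cs3, hdw2]

theorem key_lower
    (K : EuclideanSpace ℝ (Fin N) →L[ℝ] EuclideanSpace ℝ (Fin m))
    (A : EuclideanSpace ℝ (Fin N) →L[ℝ] PiLp 2 (fun _ : Fin p => EuclideanSpace ℝ (Fin d)))
    (u : ℕ → EuclideanSpace ℝ (Fin N))
    (w : ℕ → PiLp 2 (fun _ : Fin p => EuclideanSpace ℝ (Fin d)))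
    (v z : ℕ → EuclideanSpace ℝ (Fin m))
    (uh : EuclideanSpace ℝ (Fin N))
    (wh : PiLp 2 (fun _ : Fin p => EuclideanSpace ℝ (Fin d)))
    (vh : EuclideanSpace ℝ (Fin m))
    {θ : ℝ} (hθ0 : 0 < θ) (hθ1 : θ ≤ 1)
    {t c : ℝ} (ht0 : 0 < t) (n : ℕ) :
    (1 - ‖K‖ ^ 2 * t⁻¹) * ‖u (n + 1) - uh‖ ^ 2 + (1 - ‖A‖ ^ 2) * ‖w (n + 1) - wh‖ ^ 2
      + ‖v (n + 1) - vh‖ ^ 2 + (c - t) * ‖aseq K u z n‖ ^ 2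
    ≤ Phi K A u w v z uh wh vh θ c (n + 1) := by
  have hP1 : Phi K A u w v z uh wh vh θ c (n + 1)
      = ‖u (n + 1) - uh‖ ^ 2 + ‖w (n + 1) - wh‖ ^ 2 - ‖A.adjoint (w (n + 1) - wh)‖ ^ 2
        + θ⁻¹ * ‖v (n + 1) - vh‖ ^ 2 - 2 * ⟪K (u (n + 1) - uh), aseq K u z n⟫
        + c * ‖aseq K u z n‖ ^ 2 := by
    simp only [Phi, show n + 1 - 1 = n from rfl]
  have cs1 : ‖A.adjoint (w (n + 1) - wh)‖ ^ 2 ≤ ‖A‖ ^ 2 * ‖w (n + 1) - wh‖ ^ 2 := by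
    have h := A.adjoint.le_opNorm (w (n + 1) - wh)
    rw [LinearIsometryEquiv.norm_map ContinuousLinearMap.adjoint A] at h
    nlinarith [norm_nonneg (A.adjoint (w (n + 1) - wh)), norm_nonneg A,
      norm_nonneg (w (n + 1) - wh)]
  have cs2 : ‖K (u (n + 1) - uh)‖ ^ 2 ≤ ‖K‖ ^ 2 * ‖u (n + 1) - uh‖ ^ 2 := by
    have h := K.le_opNorm (u (n + 1) - uh)
    nlinarith [norm_nonneg (K (u (n + 1) - uh)), norm_nonneg K, norm_nonneg (u (n + 1) - uh)]
  have cs3 : 2 * ⟪K (u (n + 1) - uh), aseq K u z n⟫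
      ≤ t * ‖aseq K u z n‖ ^ 2 + t⁻¹ * ‖K (u (n + 1) - uh)‖ ^ 2 := by
    have habs : |⟪K (u (n + 1) - uh), aseq K u z n⟫|
        ≤ ‖K (u (n + 1) - uh)‖ * ‖aseq K u z n‖ := abs_real_inner_le_norm _ _
    have expand : t * ‖aseq K u z n‖ ^ 2 + t⁻¹ * ‖K (u (n + 1) - uh)‖ ^ 2
        - 2 * (‖K (u (n + 1) - uh)‖ * ‖aseq K u z n‖)
        = t⁻¹ * (t * ‖aseq K u z n‖ - ‖K (u (n + 1) - uh)‖) ^ 2 := by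
      field_simp; ring
    have hnn : 0 ≤ t⁻¹ * (t * ‖aseq K u z n‖ - ‖K (u (n + 1) - uh)‖) ^ 2 := by positivity
    have := abs_le.mp habs
    linarith [this.1, this.2]
  have cs2' : t⁻¹ * ‖K (u (n + 1) - uh)‖ ^ 2 ≤ t⁻¹ * (‖K‖ ^ 2 * ‖u (n + 1) - uh‖ ^ 2) := by
    apply mul_le_mul_of_nonneg_left cs2 (by positivity)
  have hr : ‖v (n + 1) - vh‖ ^ 2 ≤ θ⁻¹ * ‖v (n + 1) - vh‖ ^ 2 := by
    have h1 : (1 : ℝ) ≤ θ⁻¹ := (one_le_inv₀ hθ0).mpr hθ1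
    nlinarith [sq_nonneg ‖v (n + 1) - vh‖]
  rw [hP1]
  linarith [cs1, cs3, cs2', hr]

end key

lemma tendsto_of_norm_sq {E : Type*} [NormedAddCommGroup E] {g : ℕ → E}
    (h : Tendsto (fun n => ‖g n‖ ^ 2) atTop (𝓝 0)) : Tendsto g atTop (𝓝 0) := by
  rw [tendsto_zero_iff_norm_tendsto_zero]
  have h2 := (Real.continuous_sqrt.tendsto 0).comp h
  simp only [Real.sqrt_zero, Function.comp_def] at h2
  have e : ∀ n, Real.sqrt (‖g n‖ ^ 2) = ‖g n‖ := fun n => Real.sqrt_sq (norm_nonneg _)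
  simpa only [e] using h2

lemma antitone_subseq_tendsto_zero {f : ℕ → ℝ} (hanti : ∀ n, f (n + 1) ≤ f n)
    (hnn : ∀ n, 0 ≤ f n) {φ : ℕ → ℕ} (hφ : StrictMono φ)
    (h : Tendsto (fun k => f (φ k)) atTop (𝓝 0)) : Tendsto f atTop (𝓝 0) := by
  have hA : Antitone f := antitone_nat_of_succ_le hanti
  refine Metric.tendsto_atTop.mpr fun ε hε => ?_
  obtain ⟨k, hk⟩ := Metric.tendsto_atTop.mp h ε hε
  refine ⟨φ k, fun n hn => ?_⟩
  have h2 := hk k le_rfl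
  rw [Real.dist_eq, sub_zero] at h2 ⊢
  rw [abs_of_nonneg (hnn n)]
  rw [abs_of_nonneg (hnn (φ k))] at h2
  exact lt_of_le_of_lt (hA hn) h2

theorem opt_part {N m p d : ℕ}
    (K : EuclideanSpace ℝ (Fin N) →L[ℝ] EuclideanSpace ℝ (Fin m))
    (A : EuclideanSpace ℝ (Fin N) →L[ℝ] PiLp 2 (fun _ : Fin p => EuclideanSpace ℝ (Fin d)))
    (y : EuclideanSpace ℝ (Fin m)) {eps : ℝ} (heps : 0 ≤ eps) {mu : ℝ} (hmu : 0 < mu)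
    (ud : EuclideanSpace ℝ (Fin N))
    (wd : PiLp 2 (fun _ : Fin p => EuclideanSpace ℝ (Fin d)))
    (vd zd : EuclideanSpace ℝ (Fin m))
    (hfw : wd = Pproj mu (wd + A ud))
    (hfu : K.adjoint (vd + K ud - zd) + A.adjoint wd = 0)
    (hfz : zd = Qproj y eps (K ud + vd))
    (hfv : K ud = zd) :
    ‖K ud - y‖ ≤ eps ∧
      (∀ u' : EuclideanSpace ℝ (Fin N), ‖K u' - y‖ ≤ eps →
        ∑ i, ‖(A ud) i‖ ≤ ∑ i, ‖(A u') i‖) := by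
  have hfeas : ‖K ud - y‖ ≤ eps := by
    rw [hfv, hfz, Qproj_eq_bp]
    exact bp_mem y heps _
  refine ⟨hfeas, fun u' hu' => ?_⟩
  -- block facts for wd
  have hblock : ∀ i : Fin p, wd i = bp 0 mu ((wd + A ud) i) := by
    intro i
    conv_lhs => rw [hfw]
    rw [Pproj_apply_eq]
  have hwd_norm : ∀ i, ‖wd i‖ ≤ mu := by
    intro i
    have := bp_mem (0 : EuclideanSpace ℝ (Fin d)) hmu.le ((wd + A ud) i)
    rw [sub_zero, ← hblock i] at this
    exact this
  -- variational: for each i and any c with ‖c‖ ≤ mu, ⟪(A ud) i, c - wd i⟫ ≤ 0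
  have hvar : ∀ (i : Fin p) (cc : EuclideanSpace ℝ (Fin d)), ‖cc‖ ≤ mu →
      ⟪(A ud) i, cc - wd i⟫ ≤ 0 := by
    intro i cc hcc
    have h := bp_var (0 : EuclideanSpace ℝ (Fin d)) hmu.le ((wd + A ud) i)
      (c := cc) (by rwa [sub_zero])
    rw [← hblock i] at h
    have e : (wd + A ud) i - wd i = (A ud) i := by
      simp [PiLp.add_apply]
    rwa [e] at h
  -- lower bound: mu * ∑ ‖(A ud) i‖ ≤ ⟪A ud, wd⟫ blockwise
  have hlow : ∀ i : Fin p, mu * ‖(A ud) i‖ ≤ ⟪(A ud) i, wd i⟫ := by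
    intro i
    by_cases h0 : (A ud) i = 0
    · simp [h0]
    · have hn : (0:ℝ) < ‖(A ud) i‖ := norm_pos_iff.mpr h0
      have hcc : ‖(mu / ‖(A ud) i‖) • (A ud) i‖ ≤ mu := by
        rw [norm_smul, Real.norm_eq_abs, abs_div, abs_of_nonneg hmu.le,
          abs_of_nonneg (norm_nonneg _), div_mul_cancel₀]
        exact ne_of_gt hn
      have h := hvar i _ hcc
      rw [inner_sub_right, real_inner_smul_right, real_inner_self_eq_norm_sq] at h
      have e : mu / ‖(A ud) i‖ * ‖(A ud) i‖ ^ 2 = mu * ‖(A ud) i‖ := by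
        field_simp
      linarith
  have hup : ∀ (x : EuclideanSpace ℝ (Fin N)) (i : Fin p),
      ⟪(A x) i, wd i⟫ ≤ mu * ‖(A x) i‖ := by
    intro x i
    calc ⟪(A x) i, wd i⟫ ≤ ‖(A x) i‖ * ‖wd i‖ := real_inner_le_norm _ _
      _ ≤ ‖(A x) i‖ * mu := mul_le_mul_of_nonneg_left (hwd_norm i) (norm_nonneg _)
      _ = mu * ‖(A x) i‖ := by ring
  -- identity ⟪A x, wd⟫ = -⟪K x, vd⟫
  have hKv : ∀ x : EuclideanSpace ℝ (Fin N), ⟪A x, wd⟫ = -⟪K x, vd⟫ := by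
    intro x
    have e : vd + K ud - zd = vd := by rw [hfv]; abel
    rw [e] at hfu
    have h := congrArg (fun q => ⟪x, q⟫) hfu
    simp only [inner_add_right, inner_zero_right] at h
    rw [ContinuousLinearMap.adjoint_inner_right, ContinuousLinearMap.adjoint_inner_right] at h
    linarith [h]
  -- variational for Q at Ku'
  have hQ : ⟪vd, K u' - K ud⟫ ≤ 0 := by
    have h := bp_var y heps (K ud + vd) (c := K u') hu'
    rw [← Qproj_eq_bp, ← hfz, ← hfv] at h
    have e : K ud + vd - K ud = vd := by abel
    rwa [e] at h
  -- combine
  have sum_low : mu * ∑ i, ‖(A ud) i‖ ≤ ⟪A ud, wd⟫ := by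
    rw [PiLp.inner_apply, Finset.mul_sum]
    exact Finset.sum_le_sum fun i _ => hlow i
  have sum_up : ⟪A u', wd⟫ ≤ mu * ∑ i, ‖(A u') i‖ := by
    rw [PiLp.inner_apply, Finset.mul_sum]
    exact Finset.sum_le_sum fun i _ => hup u' i
  have hmid : ⟪A ud, wd⟫ ≤ ⟪A u', wd⟫ := by
    rw [hKv ud, hKv u']
    have e : ⟪K u' - K ud, vd⟫ = ⟪K u', vd⟫ - ⟪K ud, vd⟫ := inner_sub_left _ _ _
    have e2 : ⟪vd, K u' - K ud⟫ = ⟪K u' - K ud, vd⟫ := real_inner_comm _ _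
    linarith [hQ, e2 ▸ hQ]
  have : mu * ∑ i, ‖(A ud) i‖ ≤ mu * ∑ i, ‖(A u') i‖ := le_trans sum_low (le_trans hmid sum_up)
  exact le_of_mul_le_mul_left this hmu


set_option maxHeartbeats 4000000 in
/-- **Theorem 2 of the paper (convergence of GBPDNA).** If the fixed-point system admits a
solution, then from any starting point the GBPDNA iterates converge to some fixed point
`(u†, w†, v†, z†)`, and `u†` minimizes the block `ℓ¹`-norm `‖Au‖₁` over `{u : ‖Ku − y‖ ≤ ε}`. -/
theorem stmt1 {N m p d : ℕ}
    (K : EuclideanSpace ℝ (Fin N) →L[ℝ] EuclideanSpace ℝ (Fin m))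
    (A : EuclideanSpace ℝ (Fin N) →L[ℝ] PiLp 2 (fun _ : Fin p => EuclideanSpace ℝ (Fin d)))
    (hK : ‖K‖ < 1) (hA : ‖A‖ < 1)
    (y : EuclideanSpace ℝ (Fin m)) (eps : ℝ) (heps : 0 ≤ eps) (mu : ℝ) (hmu : 0 < mu)
    (θ : ℝ) (hθ0 : 0 < θ) (hθ1 : θ ≤ 1)
    (u ubar : ℕ → EuclideanSpace ℝ (Fin N))
    (w : ℕ → PiLp 2 (fun _ : Fin p => EuclideanSpace ℝ (Fin d)))
    (v z : ℕ → EuclideanSpace ℝ (Fin m))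
    (hubar : ∀ n, ubar (n + 1) = u n - K.adjoint (v n + K (u n) - z n) - A.adjoint (w n))
    (hw : ∀ n, w (n + 1) = Pproj mu (w n + A (ubar (n + 1))))
    (hu : ∀ n, u (n + 1) = u n - K.adjoint (v n + K (u n) - z n) - A.adjoint (w (n + 1)))
    (hz : ∀ n, z (n + 1) = Qproj y eps (K (u (n + 1)) + v n))
    (hv : ∀ n, v (n + 1) = v n + θ • (K (u (n + 1)) - z (n + 1)))
    (uh : EuclideanSpace ℝ (Fin N))
    (wh : PiLp 2 (fun _ : Fin p => EuclideanSpace ℝ (Fin d)))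
    (vh zh : EuclideanSpace ℝ (Fin m))
    (hfw : wh = Pproj mu (wh + A uh))
    (hfu : K.adjoint (vh + K uh - zh) + A.adjoint wh = 0)
    (hfz : zh = Qproj y eps (K uh + vh))
    (hfv : K uh = zh)
    :
    ∃ (ud : EuclideanSpace ℝ (Fin N))
      (wd : PiLp 2 (fun _ : Fin p => EuclideanSpace ℝ (Fin d)))
      (vd zd : EuclideanSpace ℝ (Fin m)),
      wd = Pproj mu (wd + A ud) ∧
      K.adjoint (vd + K ud - zd) + A.adjoint wd = 0 ∧
      zd = Qproj y eps (K ud + vd) ∧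
      K ud = zd ∧
      Tendsto u atTop (𝓝 ud) ∧
      Tendsto w atTop (𝓝 wd) ∧
      Tendsto v atTop (𝓝 vd) ∧
      Tendsto z atTop (𝓝 zd) ∧
      ‖K ud - y‖ ≤ eps ∧
      (∀ u' : EuclideanSpace ℝ (Fin N), ‖K u' - y‖ ≤ eps →
        ∑ i, ‖(A ud) i‖ ≤ ∑ i, ‖(A u') i‖) := by
    classical
  -- constants
  set t : ℝ := (1 + ‖K‖ ^ 2) / 2 with htdef
  set c : ℝ := (1 + t) / 2 with hcdef
  have hK0 : (0:ℝ) ≤ ‖K‖ := norm_nonneg _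
  have hA0 : (0:ℝ) ≤ ‖A‖ := norm_nonneg _
  have ht0 : 0 < t := by rw [htdef]; positivity
  have hKt : ‖K‖ ^ 2 < t := by rw [htdef]; nlinarith
  have ht1 : t < 1 := by rw [htdef]; nlinarith
  have hC1 : 0 < 1 - ‖K‖ ^ 2 * t⁻¹ := by
    have h := mul_lt_mul_of_pos_right hKt (inv_pos.mpr ht0)
    rw [mul_inv_cancel₀ (ne_of_gt ht0)] at h
    linarith
  have hC2 : 0 < 1 - ‖A‖ ^ 2 := by nlinarith
  have hC3 : 0 < c - t := by rw [hcdef]; linarith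
  have hC4 : 0 < 2 - θ - c := by rw [hcdef]; linarith
  -- first Lyapunov function, w.r.t. the given fixed point
  set D : ℕ → ℝ := fun n => Phi K A u w v z uh wh vh θ c (n + 1) with hDdef
  have hstep : ∀ n, Phi K A u w v z uh wh vh θ c (n + 2)
      + (1 - ‖K‖ ^ 2 * t⁻¹) * ‖u (n + 2) - u (n + 1)‖ ^ 2
      + (1 - ‖A‖ ^ 2) * ‖w (n + 2) - w (n + 1)‖ ^ 2
      + (c - t) * ‖aseq K u z n‖ ^ 2
      + (2 - θ - c) * ‖aseq K u z (n + 1)‖ ^ 2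
      ≤ Phi K A u w v z uh wh vh θ c (n + 1) :=
    fun n => key_step K A y heps hmu.le hθ0 u ubar w v z hubar hw hu hz hv
      uh wh vh zh hfw hfu hfz hfv ht0 n
  have hlow : ∀ n, (1 - ‖K‖ ^ 2 * t⁻¹) * ‖u (n + 1) - uh‖ ^ 2
      + (1 - ‖A‖ ^ 2) * ‖w (n + 1) - wh‖ ^ 2
      + ‖v (n + 1) - vh‖ ^ 2 + (c - t) * ‖aseq K u z n‖ ^ 2
      ≤ Phi K A u w v z uh wh vh θ c (n + 1) :=
    fun n => key_lower K A u w v z uh wh vh hθ0 hθ1 ht0 n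
  have hDanti : ∀ n, D (n + 1) ≤ D n := by
    intro n
    have h := hstep n
    have n1 : 0 ≤ (1 - ‖K‖ ^ 2 * t⁻¹) * ‖u (n + 2) - u (n + 1)‖ ^ 2 :=
      mul_nonneg hC1.le (sq_nonneg _)
    have n2 : 0 ≤ (1 - ‖A‖ ^ 2) * ‖w (n + 2) - w (n + 1)‖ ^ 2 :=
      mul_nonneg hC2.le (sq_nonneg _)
    have n3 : 0 ≤ (c - t) * ‖aseq K u z n‖ ^ 2 := mul_nonneg hC3.le (sq_nonneg _)
    have n4 : 0 ≤ (2 - θ - c) * ‖aseq K u z (n + 1)‖ ^ 2 := mul_nonneg hC4.le (sq_nonneg _)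
    show Phi K A u w v z uh wh vh θ c (n + 1 + 1) ≤ Phi K A u w v z uh wh vh θ c (n + 1)
    linarith
  have hDnn : ∀ n, 0 ≤ D n := by
    intro n
    have h := hlow n
    have n1 : 0 ≤ (1 - ‖K‖ ^ 2 * t⁻¹) * ‖u (n + 1) - uh‖ ^ 2 :=
      mul_nonneg hC1.le (sq_nonneg _)
    have n2 : 0 ≤ (1 - ‖A‖ ^ 2) * ‖w (n + 1) - wh‖ ^ 2 := mul_nonneg hC2.le (sq_nonneg _)
    have n3 : 0 ≤ (c - t) * ‖aseq K u z n‖ ^ 2 := mul_nonneg hC3.le (sq_nonneg _)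
    have n4 : 0 ≤ ‖v (n + 1) - vh‖ ^ 2 := sq_nonneg _
    show (0:ℝ) ≤ Phi K A u w v z uh wh vh θ c (n + 1)
    linarith
  have hDbdd : BddBelow (Set.range D) := ⟨0, by rintro x ⟨n, rfl⟩; exact hDnn n⟩
  have hDconv : Tendsto D atTop (𝓝 (⨅ n, D n)) :=
    tendsto_atTop_ciInf (antitone_nat_of_succ_le hDanti) hDbdd
  have hdiff : Tendsto (fun n => D n - D (n + 1)) atTop (𝓝 0) := by
    have h2 : Tendsto (fun n => D (n + 1)) atTop (𝓝 (⨅ n, D n)) :=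
      hDconv.comp (tendsto_add_atTop_nat 1)
    simpa using hDconv.sub h2
  -- differences tend to zero
  have sq_from_step : ∀ (C : ℝ) (hC : 0 < C) (g : ℕ → ℝ) (hg : ∀ n, 0 ≤ g n)
      (hle : ∀ n, C * g n ≤ D n - D (n + 1)), Tendsto g atTop (𝓝 0) := by
    intro C hC g hg hle
    have hb : ∀ n, g n ≤ C⁻¹ * (D n - D (n + 1)) := by
      intro n
      rw [← mul_le_mul_iff_right₀ hC]
      calc C * g n ≤ D n - D (n + 1) := hle n
        _ = C * (C⁻¹ * (D n - D (n + 1))) := by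
            rw [← mul_assoc, mul_inv_cancel₀ (ne_of_gt hC), one_mul]
    have ht : Tendsto (fun n => C⁻¹ * (D n - D (n + 1))) atTop (𝓝 0) := by
      simpa using hdiff.const_mul C⁻¹
    exact squeeze_zero hg hb ht
  have hΔu_sq : Tendsto (fun n => ‖u (n + 2) - u (n + 1)‖ ^ 2) atTop (𝓝 0) := by
    refine sq_from_step _ hC1 _ (fun n => sq_nonneg _) fun n => ?_
    have h := hstep n
    have n2 : 0 ≤ (1 - ‖A‖ ^ 2) * ‖w (n + 2) - w (n + 1)‖ ^ 2 := mul_nonneg hC2.le (sq_nonneg _)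
    have n3 : 0 ≤ (c - t) * ‖aseq K u z n‖ ^ 2 := mul_nonneg hC3.le (sq_nonneg _)
    have n4 : 0 ≤ (2 - θ - c) * ‖aseq K u z (n + 1)‖ ^ 2 := mul_nonneg hC4.le (sq_nonneg _)
    have e : D (n + 1) = Phi K A u w v z uh wh vh θ c (n + 1 + 1) := rfl
    rw [e]
    linarith
  have hΔw_sq : Tendsto (fun n => ‖w (n + 2) - w (n + 1)‖ ^ 2) atTop (𝓝 0) := by
    refine sq_from_step _ hC2 _ (fun n => sq_nonneg _) fun n => ?_
    have h := hstep n
    have n1 : 0 ≤ (1 - ‖K‖ ^ 2 * t⁻¹) * ‖u (n + 2) - u (n + 1)‖ ^ 2 :=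
      mul_nonneg hC1.le (sq_nonneg _)
    have n3 : 0 ≤ (c - t) * ‖aseq K u z n‖ ^ 2 := mul_nonneg hC3.le (sq_nonneg _)
    have n4 : 0 ≤ (2 - θ - c) * ‖aseq K u z (n + 1)‖ ^ 2 := mul_nonneg hC4.le (sq_nonneg _)
    have e : D (n + 1) = Phi K A u w v z uh wh vh θ c (n + 1 + 1) := rfl
    rw [e]
    linarith
  have ha_sq : Tendsto (fun n => ‖aseq K u z n‖ ^ 2) atTop (𝓝 0) := by
    refine sq_from_step _ hC3 _ (fun n => sq_nonneg _) fun n => ?_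
    have h := hstep n
    have n1 : 0 ≤ (1 - ‖K‖ ^ 2 * t⁻¹) * ‖u (n + 2) - u (n + 1)‖ ^ 2 :=
      mul_nonneg hC1.le (sq_nonneg _)
    have n2 : 0 ≤ (1 - ‖A‖ ^ 2) * ‖w (n + 2) - w (n + 1)‖ ^ 2 := mul_nonneg hC2.le (sq_nonneg _)
    have n4 : 0 ≤ (2 - θ - c) * ‖aseq K u z (n + 1)‖ ^ 2 := mul_nonneg hC4.le (sq_nonneg _)
    have e : D (n + 1) = Phi K A u w v z uh wh vh θ c (n + 1 + 1) := rfl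
    rw [e]
    linarith
  have hΔu2 : Tendsto (fun n => u (n + 2) - u (n + 1)) atTop (𝓝 0) := tendsto_of_norm_sq hΔu_sq
  have hΔw2 : Tendsto (fun n => w (n + 2) - w (n + 1)) atTop (𝓝 0) := tendsto_of_norm_sq hΔw_sq
  have ha : Tendsto (aseq K u z) atTop (𝓝 0) := tendsto_of_norm_sq ha_sq
  -- boundedness
  have bound_of : ∀ (C : ℝ) (hC : 0 < C) (g : ℕ → ℝ) (hg : ∀ n, 0 ≤ g n)
      (hle : ∀ n, C * g n ^ 2 ≤ D n), ∀ n, g n ≤ Real.sqrt (D 0 / C) := by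
    intro C hC g hg hle n
    have hDn : D n ≤ D 0 := (antitone_nat_of_succ_le hDanti) (Nat.zero_le n)
    have h1 : g n ^ 2 ≤ D 0 / C := by
      rw [le_div_iff₀ hC]
      calc g n ^ 2 * C = C * g n ^ 2 := by ring
        _ ≤ D n := hle n
        _ ≤ D 0 := hDn
    have h2 := Real.sqrt_le_sqrt h1
    rwa [Real.sqrt_sq (hg n)] at h2
  have hbu : ∀ n, ‖u (n + 1) - uh‖ ≤ Real.sqrt (D 0 / (1 - ‖K‖ ^ 2 * t⁻¹)) := by
    refine bound_of _ hC1 _ (fun n => norm_nonneg _) fun n => ?_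
    have h := hlow n
    have n2 : 0 ≤ (1 - ‖A‖ ^ 2) * ‖w (n + 1) - wh‖ ^ 2 := mul_nonneg hC2.le (sq_nonneg _)
    have n3 : 0 ≤ (c - t) * ‖aseq K u z n‖ ^ 2 := mul_nonneg hC3.le (sq_nonneg _)
    have n4 : 0 ≤ ‖v (n + 1) - vh‖ ^ 2 := sq_nonneg _
    have e : D n = Phi K A u w v z uh wh vh θ c (n + 1) := rfl
    rw [e]; linarith
  have hbw : ∀ n, ‖w (n + 1) - wh‖ ≤ Real.sqrt (D 0 / (1 - ‖A‖ ^ 2)) := by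
    refine bound_of _ hC2 _ (fun n => norm_nonneg _) fun n => ?_
    have h := hlow n
    have n1 : 0 ≤ (1 - ‖K‖ ^ 2 * t⁻¹) * ‖u (n + 1) - uh‖ ^ 2 := mul_nonneg hC1.le (sq_nonneg _)
    have n3 : 0 ≤ (c - t) * ‖aseq K u z n‖ ^ 2 := mul_nonneg hC3.le (sq_nonneg _)
    have n4 : 0 ≤ ‖v (n + 1) - vh‖ ^ 2 := sq_nonneg _
    have e : D n = Phi K A u w v z uh wh vh θ c (n + 1) := rfl
    rw [e]; linarith
  have hbv : ∀ n, ‖v (n + 1) - vh‖ ≤ Real.sqrt (D 0 / 1) := by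
    refine bound_of _ one_pos _ (fun n => norm_nonneg _) fun n => ?_
    have h := hlow n
    have n1 : 0 ≤ (1 - ‖K‖ ^ 2 * t⁻¹) * ‖u (n + 1) - uh‖ ^ 2 := mul_nonneg hC1.le (sq_nonneg _)
    have n2 : 0 ≤ (1 - ‖A‖ ^ 2) * ‖w (n + 1) - wh‖ ^ 2 := mul_nonneg hC2.le (sq_nonneg _)
    have n3 : 0 ≤ (c - t) * ‖aseq K u z n‖ ^ 2 := mul_nonneg hC3.le (sq_nonneg _)
    have e : D n = Phi K A u w v z uh wh vh θ c (n + 1) := rfl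
    rw [e]; linarith
  -- compactness / cluster point
  set S := Metric.closedBall uh (Real.sqrt (D 0 / (1 - ‖K‖ ^ 2 * t⁻¹))) ×ˢ
      (Metric.closedBall wh (Real.sqrt (D 0 / (1 - ‖A‖ ^ 2))) ×ˢ
        Metric.closedBall vh (Real.sqrt (D 0 / 1))) with hSdef
  have hScomp : IsCompact S :=
    (isCompact_closedBall _ _).prod ((isCompact_closedBall _ _).prod (isCompact_closedBall _ _))
  set X : ℕ → EuclideanSpace ℝ (Fin N) ×
      (PiLp 2 (fun _ : Fin p => EuclideanSpace ℝ (Fin d)) × EuclideanSpace ℝ (Fin m)) :=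
    fun k => (u (k + 1), (w (k + 1), v (k + 1))) with hXdef
  have hXmem : ∀ k, X k ∈ S := by
    intro k
    refine ⟨?_, ?_, ?_⟩ <;> rw [Metric.mem_closedBall, dist_eq_norm]
    · exact hbu k
    · exact hbw k
    · exact hbv k
  obtain ⟨L, hLmem, φ, hφmono, hφconv⟩ := hScomp.tendsto_subseq hXmem
  set ud := L.1 with huddef
  set wd := L.2.1 with hwddef
  set vd := L.2.2 with hvddef
  have l1 : Tendsto (fun k => u (φ k + 1)) atTop (𝓝 ud) :=
    (continuous_fst.tendsto L).comp hφconv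
  have l2 : Tendsto (fun k => w (φ k + 1)) atTop (𝓝 wd) :=
    ((continuous_fst.tendsto L.2).comp ((continuous_snd.tendsto L).comp hφconv))
  have l3 : Tendsto (fun k => v (φ k + 1)) atTop (𝓝 vd) :=
    ((continuous_snd.tendsto L.2).comp ((continuous_snd.tendsto L).comp hφconv))
  have φtop : Tendsto φ atTop atTop := hφmono.tendsto_atTop
  have ψtop : Tendsto (fun k => φ k + 1) atTop atTop :=
    (tendsto_add_atTop_nat 1).comp φtop
  have l4 : Tendsto (fun k => u (φ k + 2)) atTop (𝓝 ud) := by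
    have h := l1.add (hΔu2.comp φtop)
    simp only [Function.comp_def] at h
    have e : ∀ k, u (φ k + 1) + (u (φ k + 2) - u (φ k + 1)) = u (φ k + 2) := by
      intro k; abel
    simpa only [e, add_zero] using h
  have l5 : Tendsto (fun k => w (φ k + 2)) atTop (𝓝 wd) := by
    have h := l2.add (hΔw2.comp φtop)
    simp only [Function.comp_def] at h
    have e : ∀ k, w (φ k + 1) + (w (φ k + 2) - w (φ k + 1)) = w (φ k + 2) := by
      intro k; abel
    simpa only [e, add_zero] using h
  have l6 : Tendsto (fun k => aseq K u z (φ k)) atTop (𝓝 0) := ha.comp φtop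
  have l6' : Tendsto (fun k => aseq K u z (φ k + 1)) atTop (𝓝 0) := ha.comp ψtop
  -- fixed point equation for ud, wd, vd
  have hKAd : K.adjoint vd + A.adjoint wd = 0 := by
    have hrec : ∀ k, u (φ k + 2)
        = u (φ k + 1) - K.adjoint (v (φ k + 1) + aseq K u z (φ k)) - A.adjoint (w (φ k + 2)) := by
      intro k
      have h := hu (φ k + 1)
      have e : v (φ k + 1) + K (u (φ k + 1)) - z (φ k + 1)
          = v (φ k + 1) + aseq K u z (φ k) := by
        simp only [aseq]; abel
      rw [e] at h
      exact h
    have T2 : Tendsto (fun k => u (φ k + 1) - K.adjoint (v (φ k + 1) + aseq K u z (φ k))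
        - A.adjoint (w (φ k + 2))) atTop (𝓝 (ud - K.adjoint (vd + 0) - A.adjoint wd)) :=
      (l1.sub ((K.adjoint.continuous.tendsto _).comp (l3.add l6))).sub
        ((A.adjoint.continuous.tendsto _).comp l5)
    have T2' : Tendsto (fun k => u (φ k + 2)) atTop (𝓝 (ud - K.adjoint (vd + 0) - A.adjoint wd)) :=
      T2.congr fun k => (hrec k).symm
    have heq : ud = ud - K.adjoint (vd + 0) - A.adjoint wd := tendsto_nhds_unique l4 T2'
    rw [add_zero] at heq
    have h2 : ud - K.adjoint vd - A.adjoint wd - ud = 0 := by rw [← heq]; simp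
    have h3 : K.adjoint vd + A.adjoint wd
        = -(ud - K.adjoint vd - A.adjoint wd - ud) := by abel
    rw [h2, neg_zero] at h3
    exact h3
  have hfw_d : wd = Pproj mu (wd + A ud) := by
    have hrec : ∀ k, w (φ k + 2) = Pproj mu (w (φ k + 1)
        + A (u (φ k + 2) + (A.adjoint (w (φ k + 2)) - A.adjoint (w (φ k + 1))))) := by
      intro k
      have hub : ubar (φ k + 2)
          = u (φ k + 2) + (A.adjoint (w (φ k + 2)) - A.adjoint (w (φ k + 1))) := by
        rw [hubar (φ k + 1), hu (φ k + 1)]; abel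
      have h := hw (φ k + 1)
      rw [hub] at h
      exact h
    have T2 : Tendsto (fun k => Pproj mu (w (φ k + 1)
        + A (u (φ k + 2) + (A.adjoint (w (φ k + 2)) - A.adjoint (w (φ k + 1)))))) atTop
        (𝓝 (Pproj mu (wd + A (ud + (A.adjoint wd - A.adjoint wd))))) :=
      ((Pproj_continuous hmu.le).tendsto _).comp (l2.add ((A.continuous.tendsto _).comp
        (l4.add (((A.adjoint.continuous.tendsto _).comp l5).sub
          ((A.adjoint.continuous.tendsto _).comp l2)))))
    have T2' : Tendsto (fun k => w (φ k + 2)) atTop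
        (𝓝 (Pproj mu (wd + A (ud + (A.adjoint wd - A.adjoint wd))))) :=
      T2.congr fun k => (hrec k).symm
    have heq := tendsto_nhds_unique l5 T2'
    simpa using heq
  have hfz_d : K ud = Qproj y eps (K ud + vd) := by
    have hrec : ∀ k, K (u (φ k + 2)) - aseq K u z (φ k + 1)
        = Qproj y eps (K (u (φ k + 2)) + v (φ k + 1)) := by
      intro k
      have h := hz (φ k + 1)
      have e : K (u (φ k + 2)) - aseq K u z (φ k + 1) = z (φ k + 2) := by
        simp only [aseq]; abel
      rw [e]
      exact h
    have T1 : Tendsto (fun k => K (u (φ k + 2)) - aseq K u z (φ k + 1)) atTop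
        (𝓝 (K ud - 0)) := ((K.continuous.tendsto _).comp l4).sub l6'
    have T2 : Tendsto (fun k => Qproj y eps (K (u (φ k + 2)) + v (φ k + 1))) atTop
        (𝓝 (Qproj y eps (K ud + vd))) := by
      rw [Qproj_eq_bp]
      exact ((bp_continuous y heps).tendsto _).comp (((K.continuous.tendsto _).comp l4).add l3)
    have heq := tendsto_nhds_unique (T1.congr hrec) T2
    rwa [sub_zero] at heq
  have hfu_d : K.adjoint (vd + K ud - K ud) + A.adjoint wd = 0 := by
    have e : vd + K ud - K ud = vd := by abel
    rw [e]
    exact hKAd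
  -- second Lyapunov function, w.r.t. the limit fixed point
  set D2 : ℕ → ℝ := fun n => Phi K A u w v z ud wd vd θ c (n + 1) with hD2def
  have hstep2 : ∀ n, Phi K A u w v z ud wd vd θ c (n + 2)
      + (1 - ‖K‖ ^ 2 * t⁻¹) * ‖u (n + 2) - u (n + 1)‖ ^ 2
      + (1 - ‖A‖ ^ 2) * ‖w (n + 2) - w (n + 1)‖ ^ 2
      + (c - t) * ‖aseq K u z n‖ ^ 2
      + (2 - θ - c) * ‖aseq K u z (n + 1)‖ ^ 2
      ≤ Phi K A u w v z ud wd vd θ c (n + 1) :=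
    fun n => key_step K A y heps hmu.le hθ0 u ubar w v z hubar hw hu hz hv
      ud wd vd (K ud) hfw_d hfu_d hfz_d rfl ht0 n
  have hlow2 : ∀ n, (1 - ‖K‖ ^ 2 * t⁻¹) * ‖u (n + 1) - ud‖ ^ 2
      + (1 - ‖A‖ ^ 2) * ‖w (n + 1) - wd‖ ^ 2
      + ‖v (n + 1) - vd‖ ^ 2 + (c - t) * ‖aseq K u z n‖ ^ 2
      ≤ Phi K A u w v z ud wd vd θ c (n + 1) :=
    fun n => key_lower K A u w v z ud wd vd hθ0 hθ1 ht0 n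
  have hD2anti : ∀ n, D2 (n + 1) ≤ D2 n := by
    intro n
    have h := hstep2 n
    have n1 : 0 ≤ (1 - ‖K‖ ^ 2 * t⁻¹) * ‖u (n + 2) - u (n + 1)‖ ^ 2 :=
      mul_nonneg hC1.le (sq_nonneg _)
    have n2 : 0 ≤ (1 - ‖A‖ ^ 2) * ‖w (n + 2) - w (n + 1)‖ ^ 2 :=
      mul_nonneg hC2.le (sq_nonneg _)
    have n3 : 0 ≤ (c - t) * ‖aseq K u z n‖ ^ 2 := mul_nonneg hC3.le (sq_nonneg _)
    have n4 : 0 ≤ (2 - θ - c) * ‖aseq K u z (n + 1)‖ ^ 2 := mul_nonneg hC4.le (sq_nonneg _)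
    show Phi K A u w v z ud wd vd θ c (n + 1 + 1) ≤ Phi K A u w v z ud wd vd θ c (n + 1)
    linarith
  have hD2nn : ∀ n, 0 ≤ D2 n := by
    intro n
    have h := hlow2 n
    have n1 : 0 ≤ (1 - ‖K‖ ^ 2 * t⁻¹) * ‖u (n + 1) - ud‖ ^ 2 :=
      mul_nonneg hC1.le (sq_nonneg _)
    have n2 : 0 ≤ (1 - ‖A‖ ^ 2) * ‖w (n + 1) - wd‖ ^ 2 := mul_nonneg hC2.le (sq_nonneg _)
    have n3 : 0 ≤ (c - t) * ‖aseq K u z n‖ ^ 2 := mul_nonneg hC3.le (sq_nonneg _)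
    have n4 : 0 ≤ ‖v (n + 1) - vd‖ ^ 2 := sq_nonneg _
    show (0:ℝ) ≤ Phi K A u w v z ud wd vd θ c (n + 1)
    linarith
  -- the subsequence of D2 tends to zero
  have du0 : Tendsto (fun k => u (φ k + 1) - ud) atTop (𝓝 0) := by
    simpa using l1.sub (tendsto_const_nhds (x := ud))
  have dw0 : Tendsto (fun k => w (φ k + 1) - wd) atTop (𝓝 0) := by
    simpa using l2.sub (tendsto_const_nhds (x := wd))
  have dv0 : Tendsto (fun k => v (φ k + 1) - vd) atTop (𝓝 0) := by
    simpa using l3.sub (tendsto_const_nhds (x := vd))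
  have hD2sub : Tendsto (fun k => D2 (φ k)) atTop (𝓝 0) := by
    have e : ∀ k, D2 (φ k) = ‖u (φ k + 1) - ud‖ ^ 2 + ‖w (φ k + 1) - wd‖ ^ 2
        - ‖A.adjoint (w (φ k + 1) - wd)‖ ^ 2 + θ⁻¹ * ‖v (φ k + 1) - vd‖ ^ 2
        - 2 * ⟪K (u (φ k + 1) - ud), aseq K u z (φ k)⟫
        + c * ‖aseq K u z (φ k)‖ ^ 2 := by
      intro k
      simp only [hD2def, Phi, Nat.add_sub_cancel]
    have T := (((((du0.norm.pow 2).add (dw0.norm.pow 2)).sub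
        ((((A.adjoint.continuous.tendsto 0).comp dw0).norm).pow 2)).add
        ((dv0.norm.pow 2).const_mul θ⁻¹)).sub
        ((((K.continuous.tendsto 0).comp du0).inner l6).const_mul 2)).add
        ((l6.norm.pow 2).const_mul c)
    have T2 := T.congr fun k => (e k).symm
    simpa using T2
  have hD2to0 : Tendsto D2 atTop (𝓝 0) :=
    antitone_subseq_tendsto_zero hD2anti hD2nn hφmono hD2sub
  -- squeeze each component
  have sq2 : ∀ (C : ℝ) (hC : 0 < C) (g : ℕ → ℝ) (hg : ∀ n, 0 ≤ g n)
      (hle : ∀ n, C * g n ≤ D2 n), Tendsto g atTop (𝓝 0) := by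
    intro C hC g hg hle
    have hb : ∀ n, g n ≤ C⁻¹ * D2 n := by
      intro n
      rw [← mul_le_mul_iff_right₀ hC]
      calc C * g n ≤ D2 n := hle n
        _ = C * (C⁻¹ * D2 n) := by rw [← mul_assoc, mul_inv_cancel₀ (ne_of_gt hC), one_mul]
    exact squeeze_zero hg hb (by simpa using hD2to0.const_mul C⁻¹)
  have hUsq : Tendsto (fun n => ‖u (n + 1) - ud‖ ^ 2) atTop (𝓝 0) := by
    refine sq2 _ hC1 _ (fun n => sq_nonneg _) fun n => ?_
    have h := hlow2 n
    have n2 : 0 ≤ (1 - ‖A‖ ^ 2) * ‖w (n + 1) - wd‖ ^ 2 := mul_nonneg hC2.le (sq_nonneg _)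
    have n3 : 0 ≤ (c - t) * ‖aseq K u z n‖ ^ 2 := mul_nonneg hC3.le (sq_nonneg _)
    have n4 : 0 ≤ ‖v (n + 1) - vd‖ ^ 2 := sq_nonneg _
    have eD : D2 n = Phi K A u w v z ud wd vd θ c (n + 1) := rfl
    rw [eD]; linarith
  have hWsq : Tendsto (fun n => ‖w (n + 1) - wd‖ ^ 2) atTop (𝓝 0) := by
    refine sq2 _ hC2 _ (fun n => sq_nonneg _) fun n => ?_
    have h := hlow2 n
    have n1 : 0 ≤ (1 - ‖K‖ ^ 2 * t⁻¹) * ‖u (n + 1) - ud‖ ^ 2 := mul_nonneg hC1.le (sq_nonneg _)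
    have n3 : 0 ≤ (c - t) * ‖aseq K u z n‖ ^ 2 := mul_nonneg hC3.le (sq_nonneg _)
    have n4 : 0 ≤ ‖v (n + 1) - vd‖ ^ 2 := sq_nonneg _
    have eD : D2 n = Phi K A u w v z ud wd vd θ c (n + 1) := rfl
    rw [eD]; linarith
  have hVsq : Tendsto (fun n => ‖v (n + 1) - vd‖ ^ 2) atTop (𝓝 0) := by
    refine sq2 _ one_pos _ (fun n => sq_nonneg _) fun n => ?_
    have h := hlow2 n
    have n1 : 0 ≤ (1 - ‖K‖ ^ 2 * t⁻¹) * ‖u (n + 1) - ud‖ ^ 2 := mul_nonneg hC1.le (sq_nonneg _)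
    have n2 : 0 ≤ (1 - ‖A‖ ^ 2) * ‖w (n + 1) - wd‖ ^ 2 := mul_nonneg hC2.le (sq_nonneg _)
    have n3 : 0 ≤ (c - t) * ‖aseq K u z n‖ ^ 2 := mul_nonneg hC3.le (sq_nonneg _)
    have eD : D2 n = Phi K A u w v z ud wd vd θ c (n + 1) := rfl
    rw [eD]; linarith
  have hU2 : Tendsto (fun n => u (n + 1)) atTop (𝓝 ud) := by
    have h := (tendsto_of_norm_sq hUsq).add (tendsto_const_nhds (x := ud))
    simpa using h
  have hW2 : Tendsto (fun n => w (n + 1)) atTop (𝓝 wd) := by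
    have h := (tendsto_of_norm_sq hWsq).add (tendsto_const_nhds (x := wd))
    simpa using h
  have hV2 : Tendsto (fun n => v (n + 1)) atTop (𝓝 vd) := by
    have h := (tendsto_of_norm_sq hVsq).add (tendsto_const_nhds (x := vd))
    simpa using h
  have hU : Tendsto u atTop (𝓝 ud) := (tendsto_add_atTop_iff_nat 1).mp hU2
  have hW : Tendsto w atTop (𝓝 wd) := (tendsto_add_atTop_iff_nat 1).mp hW2
  have hV : Tendsto v atTop (𝓝 vd) := (tendsto_add_atTop_iff_nat 1).mp hV2
  have hZ : Tendsto z atTop (𝓝 (K ud)) := by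
    have e : ∀ n, z (n + 1) = K (u (n + 1)) - aseq K u z n := by
      intro n; simp only [aseq]; abel
    have T : Tendsto (fun n => K (u (n + 1)) - aseq K u z n) atTop (𝓝 (K ud - 0)) :=
      ((K.continuous.tendsto _).comp hU2).sub ha
    have T2 : Tendsto (fun n => z (n + 1)) atTop (𝓝 (K ud - 0)) := T.congr fun n => (e n).symm
    rw [sub_zero] at T2
    exact (tendsto_add_atTop_iff_nat 1).mp T2
  obtain ⟨hfeas, hopt⟩ := opt_part K A y heps hmu ud wd vd (K ud) hfw_d hfu_d hfz_d rfl
  exact ⟨ud, wd, vd, K ud, hfw_d, hfu_d, hfz_d, rfl, hU, hW, hV, hZ, hfeas, hopt⟩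
end

section
/- If (û, ŵ, v̂, ẑ) satisfies the fixed-point system — i.e. ŵ = P_μ(ŵ + Aû), Kᵀ(v̂ + Kû − ẑ) + Aᵀŵ = 0, ẑ = Q_{y,ε}(Kû + v̂) and Kû = ẑ — then ‖Kû − y‖ ≤ ε and ‖Aû‖₁ ≤ ‖Au‖₁ for every u ∈ ℝ^N with ‖Ku − y‖ ≤ ε; that is, û minimizes ‖Au‖₁ subject to ‖Ku − y‖ ≤ ε. -/
open RealInnerProductSpace


/-- Fixed point of ball projection: inner product and norm facts. -/
lemma fixedpoint_ball {E : Type*} [NormedAddCommGroup E] [InnerProductSpace ℝ E]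
    (lam : ℝ) (hlam : 0 < lam) (w a : E) (h : w = if lam < ‖w + a‖ then (lam / ‖w + a‖) • (w + a) else (w + a)) :
    ‖w‖ ≤ lam ∧ ⟪w, a⟫ = lam * ‖a‖ := by
  by_cases hc : lam < ‖w + a‖
  · rw [if_pos hc] at h
    set s := w + a with hs
    have hn : (0:ℝ) < ‖s‖ := lt_trans hlam hc
    have ha : a = (1 - lam / ‖s‖) • s := by
      have : a = s - w := by rw [hs]; abel
      rw [this, h, sub_smul, one_smul]
    have hcoef : 0 ≤ 1 - lam / ‖s‖ := by
      rw [sub_nonneg, div_le_one hn]; exact le_of_lt hc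
    constructor
    · rw [h, norm_smul]
      have : ‖lam / ‖s‖‖ = lam / ‖s‖ := abs_of_nonneg (by positivity)
      rw [this, div_mul_cancel₀ _ (ne_of_gt hn)]
    · rw [h, ha, real_inner_smul_left, real_inner_smul_right,
        real_inner_self_eq_norm_sq, norm_smul]
      have : ‖(1 - lam / ‖s‖)‖ = 1 - lam / ‖s‖ := abs_of_nonneg hcoef
      rw [this]
      field_simp
  · rw [if_neg hc] at h
    have ha : a = 0 := left_eq_add.mp h
    constructor
    · calc ‖w‖ = ‖w + a‖ := by rw [ha, add_zero]
        _ ≤ lam := le_of_not_gt hc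
    · simp [ha]

/-- If `(û, ŵ, v̂, ẑ)` satisfies the fixed-point system `ŵ = P_μ(ŵ + Aû)`,
`Kᵀ(v̂ + Kû − ẑ) + Aᵀŵ = 0`, `ẑ = Q_{y,ε}(Kû + v̂)`, `Kû = ẑ`, then `û` minimizes the block
`ℓ¹`-norm `‖Au‖₁ = Σᵢ ‖(Au)ᵢ‖₂` subject to the constraint `‖Ku − y‖ ≤ ε`. -/
theorem stmt2 {N m p d : ℕ}
    (K : EuclideanSpace ℝ (Fin N) →L[ℝ] EuclideanSpace ℝ (Fin m))
    (A : EuclideanSpace ℝ (Fin N) →L[ℝ] PiLp 2 (fun _ : Fin p => EuclideanSpace ℝ (Fin d)))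
    (y : EuclideanSpace ℝ (Fin m)) (eps : ℝ) (heps : 0 ≤ eps) (mu : ℝ) (hmu : 0 < mu)
    (uh : EuclideanSpace ℝ (Fin N))
    (wh : PiLp 2 (fun _ : Fin p => EuclideanSpace ℝ (Fin d)))
    (vh zh : EuclideanSpace ℝ (Fin m))
    (hfw : wh = Pproj mu (wh + A uh))
    (hfu : K.adjoint (vh + K uh - zh) + A.adjoint wh = 0)
    (hfz : zh = Qproj y eps (K uh + vh))
    (hfv : K uh = zh) :
    ‖K uh - y‖ ≤ eps ∧
      ∀ u : EuclideanSpace ℝ (Fin N), ‖K u - y‖ ≤ eps →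
        ∑ i, ‖(A uh) i‖ ≤ ∑ i, ‖(A u) i‖ := by
  -- reduce hfu
  have hadj : A.adjoint wh = - K.adjoint vh := by
    have h1 : vh + K uh - zh = vh := by rw [hfv]; abel
    rw [h1] at hfu
    rw [eq_neg_iff_add_eq_zero, add_comm]
    exact hfu
  -- per-block facts from hfw
  have hblock : ∀ i, ‖wh i‖ ≤ mu ∧ ⟪wh i, (A uh) i⟫ = mu * ‖(A uh) i‖ := by
    intro i
    apply fixedpoint_ball mu hmu
    have := congrFun (congrArg WithLp.ofLp hfw) i
    simpa [Pproj] using this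
  -- feasibility and claim C
  have hfeas : ‖K uh - y‖ ≤ eps ∧ ⟪vh, K uh - y⟫ = eps * ‖vh‖ := by
    by_cases hc : eps < ‖K uh + vh - y‖
    · rw [Qproj, if_pos hc] at hfz
      set t := K uh + vh - y with ht
      have hn : (0:ℝ) < ‖t‖ := lt_of_le_of_lt heps hc
      have hzy : K uh - y = (eps / ‖t‖) • t := by
        rw [hfv, hfz]; abel
      have hv : vh = (1 - eps / ‖t‖) • t := by
        have : vh = t - (K uh - y) := by rw [ht]; abel
        rw [this, hzy, sub_smul, one_smul]
      have hcoef : 0 ≤ 1 - eps / ‖t‖ := by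
        rw [sub_nonneg, div_le_one hn]; exact le_of_lt hc
      constructor
      · rw [hzy, norm_smul]
        have : ‖eps / ‖t‖‖ = eps / ‖t‖ := abs_of_nonneg (by positivity)
        rw [this, div_mul_cancel₀ _ (ne_of_gt hn)]
      · rw [hzy, hv, real_inner_smul_left, real_inner_smul_right,
          real_inner_self_eq_norm_sq, norm_smul]
        have : ‖(1 - eps / ‖t‖)‖ = 1 - eps / ‖t‖ := abs_of_nonneg hcoef
        rw [this]
        field_simp
    · rw [Qproj, if_neg hc] at hfz
      have hv : vh = 0 := by
        have h2 : K uh = K uh + vh := hfv.trans hfz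
        exact left_eq_add.mp h2
      constructor
      · have : K uh - y = K uh + vh - y := by rw [hv]; abel
        rw [this]
        exact le_of_not_gt hc
      · simp [hv]
  refine ⟨hfeas.1, fun u hu => ?_⟩
  -- key identities
  have hWA : ∀ v : EuclideanSpace ℝ (Fin N), ⟪wh, A v⟫ = - ⟪vh, K v⟫ := by
    intro v
    rw [← ContinuousLinearMap.adjoint_inner_left, hadj, inner_neg_left,
      ContinuousLinearMap.adjoint_inner_left]
  have hsum_uh : mu * ∑ i, ‖(A uh) i‖ = ⟪wh, A uh⟫ := by
    rw [PiLp.inner_apply, Finset.mul_sum]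
    apply Finset.sum_congr rfl
    intro i _
    exact ((hblock i).2).symm
  have hsum_u : ⟪wh, A u⟫ ≤ mu * ∑ i, ‖(A u) i‖ := by
    rw [PiLp.inner_apply, Finset.mul_sum]
    apply Finset.sum_le_sum
    intro i _
    calc ⟪wh i, (A u) i⟫ ≤ ‖wh i‖ * ‖(A u) i‖ := real_inner_le_norm _ _
      _ ≤ mu * ‖(A u) i‖ := by
          apply mul_le_mul_of_nonneg_right (hblock i).1 (norm_nonneg _)
  -- inner product splits
  have hsplit_uh : ⟪vh, K uh⟫ = eps * ‖vh‖ + ⟪vh, y⟫ := by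
    have := hfeas.2
    rw [inner_sub_right] at this
    linarith
  have hsplit_u : ⟪vh, K u⟫ ≤ eps * ‖vh‖ + ⟪vh, y⟫ := by
    have h1 : ⟪vh, K u - y⟫ = ⟪vh, K u⟫ - ⟪vh, y⟫ := inner_sub_right _ _ _
    have h2 : ⟪vh, K u - y⟫ ≤ ‖vh‖ * ‖K u - y‖ := real_inner_le_norm _ _
    have h3 : ‖vh‖ * ‖K u - y‖ ≤ ‖vh‖ * eps :=
      mul_le_mul_of_nonneg_left hu (norm_nonneg _)
    nlinarith
  have hmain : mu * ∑ i, ‖(A uh) i‖ ≤ mu * ∑ i, ‖(A u) i‖ := by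
    rw [hsum_uh, hWA]
    calc - ⟪vh, K uh⟫ = - (eps * ‖vh‖) - ⟪vh, y⟫ := by rw [hsplit_uh]; ring
      _ ≤ - ⟪vh, K u⟫ := by linarith
      _ = ⟪wh, A u⟫ := (hWA u).symm
      _ ≤ mu * ∑ i, ‖(A u) i‖ := hsum_u
  exact le_of_mul_le_mul_left hmain hmu
end

section
/- Let μ > 0 and let a, w ∈ (ℝ^d)^p. Then w = P_μ(w + a) if and only if w is a subgradient of the function μ‖·‖₁ at a, i.e. if and only if for all b ∈ (ℝ^d)^p one has μ‖b‖₁ ≥ μ‖a‖₁ + ⟨w, b − a⟩. -/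
open scoped RealInnerProductSpace

variable {d : ℕ}

lemma blockA (mu : ℝ) (hmu : 0 < mu) (x y : EuclideanSpace ℝ (Fin d)) :
    (∀ b : EuclideanSpace ℝ (Fin d), mu * ‖b‖ ≥ mu * ‖x‖ + ⟪y, b - x⟫) ↔
      (‖y‖ ≤ mu ∧ ⟪y, x⟫ = mu * ‖x‖) := by
  constructor
  · intro h
    have hy : ‖y‖ ≤ mu := by
      rcases eq_or_ne y 0 with rfl | hy0
      · simpa using hmu.le
      · have h1 := h (x + y)
        rw [add_sub_cancel_left, real_inner_self_eq_norm_sq] at h1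
        have h3 : ‖x + y‖ ≤ ‖x‖ + ‖y‖ := norm_add_le x y
        have h4 : mu * ‖x + y‖ ≤ mu * (‖x‖ + ‖y‖) :=
          mul_le_mul_of_nonneg_left h3 hmu.le
        have h5 : ‖y‖ ^ 2 ≤ mu * ‖y‖ := by nlinarith
        have h6 : 0 < ‖y‖ := norm_pos_iff.mpr hy0
        nlinarith
    refine ⟨hy, le_antisymm ?_ ?_⟩
    · calc ⟪y, x⟫ ≤ ‖y‖ * ‖x‖ := real_inner_le_norm y x
        _ ≤ mu * ‖x‖ := mul_le_mul_of_nonneg_right hy (norm_nonneg x)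
    · have h1 := h 0
      have : ⟪y, (0 : EuclideanSpace ℝ (Fin d)) - x⟫ = -⟪y, x⟫ := by
        simp [inner_sub_right]
      rw [this, norm_zero, mul_zero] at h1
      linarith
  · rintro ⟨hy, hin⟩ b
    have h1 : ⟪y, b - x⟫ = ⟪y, b⟫ - ⟪y, x⟫ := inner_sub_right y b x
    have h2 : ⟪y, b⟫ ≤ ‖y‖ * ‖b‖ := real_inner_le_norm y b
    have h3 : ‖y‖ * ‖b‖ ≤ mu * ‖b‖ := mul_le_mul_of_nonneg_right hy (norm_nonneg b)
    rw [h1, hin]; linarith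

lemma blockB (mu : ℝ) (hmu : 0 < mu) (x y : EuclideanSpace ℝ (Fin d)) :
    (y = if mu < ‖y + x‖ then (mu / ‖y + x‖) • (y + x) else y + x) ↔
      (‖y‖ ≤ mu ∧ ⟪y, x⟫ = mu * ‖x‖) := by
  constructor
  · intro h
    by_cases hr : mu < ‖y + x‖
    · rw [if_pos hr] at h
      set v := y + x with hv
      have hr0 : (0:ℝ) < ‖v‖ := lt_trans hmu hr
      have hny : ‖y‖ = mu := by
        rw [h, norm_smul, Real.norm_eq_abs, abs_of_pos (div_pos hmu hr0)]
        field_simp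
      have hx : x = (1 - mu / ‖v‖) • v := by
        have : x = v - y := by rw [hv]; abel
        rw [this, h, sub_smul, one_smul]
      have hnx : ‖x‖ = ‖v‖ - mu := by
        rw [hx, norm_smul, Real.norm_eq_abs, abs_of_pos (by
          rw [sub_pos]; exact (div_lt_one hr0).mpr hr)]
        field_simp
      refine ⟨le_of_eq hny, ?_⟩
      have key : ⟪y, x⟫ = mu * (‖v‖ - mu) := by
        rw [h, hx, real_inner_smul_left, real_inner_smul_right,
          real_inner_self_eq_norm_mul_norm]
        field_simp
      rw [key, hnx]
    · rw [if_neg hr] at h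
      have hx0 : x = 0 := by
        have := h.symm
        rwa [add_eq_left] at this
      subst hx0
      push_neg at hr
      constructor
      · simpa using hr
      · simp
  · rintro ⟨hy, hin⟩
    rcases eq_or_ne x 0 with rfl | hx0
    · have : ¬ mu < ‖y + 0‖ := by simpa using hy
      rw [if_neg this]; simp
    · have hxpos : (0:ℝ) < ‖x‖ := norm_pos_iff.mpr hx0
      have hcs : ⟪y, x⟫ ≤ ‖y‖ * ‖x‖ := real_inner_le_norm y x
      have hny : ‖y‖ = mu := by
        have : mu * ‖x‖ ≤ ‖y‖ * ‖x‖ := by rw [← hin]; exact hcs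
        have h2 : mu ≤ ‖y‖ := le_of_mul_le_mul_right this hxpos
        linarith
      have heq : ⟪y, x⟫ = ‖y‖ * ‖x‖ := by rw [hny, hin]
      have hsm : ‖x‖ • y = ‖y‖ • x := inner_eq_norm_mul_iff_real.mp heq
      have hsm2 : ‖x‖ • y = mu • x := by rw [hsm, hny]
      have hyx : y = (mu / ‖x‖) • x := by
        have h1 : (‖x‖)⁻¹ • (‖x‖ • y) = (‖x‖)⁻¹ • (mu • x) := by rw [hsm2]
        rw [smul_smul, smul_smul, inv_mul_cancel₀ hxpos.ne', one_smul] at h1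
        rw [h1]
        congr 1
        field_simp
      have hc : (mu + ‖x‖) / ‖x‖ = mu / ‖x‖ + 1 := by field_simp
      have hsum : y + x = ((mu + ‖x‖) / ‖x‖) • x := by
        rw [hyx, hc, add_smul, one_smul]
      have hns : ‖y + x‖ = mu + ‖x‖ := by
        rw [hsum, norm_smul, Real.norm_eq_abs,
          abs_of_pos (div_pos (by linarith) hxpos)]
        field_simp
      have hlt : mu < ‖y + x‖ := by rw [hns]; linarith
      rw [if_pos hlt, hns, hsum, smul_smul, hyx]
      congr 1
      field_simp

/-- For `μ > 0` and `a, w ∈ (ℝ^d)^p`, `w = P_μ(w + a)` holds if and only if `w` is a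
subgradient of the block `ℓ¹`-norm functional `μ‖·‖₁` at `a`, i.e. iff for all `b`,
`μ‖b‖₁ ≥ μ‖a‖₁ + ⟨w, b − a⟩`. -/
theorem stmt3 {d p : ℕ} (mu : ℝ) (hmu : 0 < mu)
    (a w : PiLp 2 (fun _ : Fin p => EuclideanSpace ℝ (Fin d))) :
    w = Pproj mu (w + a) ↔
      ∀ b : PiLp 2 (fun _ : Fin p => EuclideanSpace ℝ (Fin d)),
        mu * (∑ i, ‖b i‖) ≥ mu * (∑ i, ‖a i‖) + ⟪w, b - a⟫ := by
  have hfix : (w = Pproj mu (w + a)) ↔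
      ∀ i, ‖w i‖ ≤ mu ∧ ⟪w i, a i⟫ = mu * ‖a i‖ := by
    rw [WithLp.ext_iff, funext_iff]
    apply forall_congr'
    intro i
    have hi : Pproj mu (w + a) i =
        if mu < ‖w i + a i‖ then (mu / ‖w i + a i‖) • (w i + a i) else w i + a i := by
      simp only [Pproj, PiLp.add_apply, PiLp.toLp_apply]
      rfl
    rw [hi]
    exact blockB mu hmu (a i) (w i)
  rw [hfix]
  constructor
  · intro h b
    have hin : ⟪w, b - a⟫ = ∑ i, ⟪w i, b i - a i⟫ := by
      rw [PiLp.inner_apply]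
      simp [PiLp.sub_apply]
    rw [hin]
    have h1 : ∀ i ∈ Finset.univ, mu * ‖a i‖ + ⟪w i, b i - a i⟫ ≤ mu * ‖b i‖ :=
      fun i _ => (blockA mu hmu (a i) (w i)).mpr (h i) (b i)
    calc mu * ∑ i, ‖a i‖ + ∑ i, ⟪w i, b i - a i⟫
        = ∑ i, (mu * ‖a i‖ + ⟪w i, b i - a i⟫) := by
          rw [Finset.sum_add_distrib, Finset.mul_sum]
      _ ≤ ∑ i, mu * ‖b i‖ := Finset.sum_le_sum h1
      _ = mu * ∑ i, ‖b i‖ := (Finset.mul_sum _ _ _).symm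
  · intro h i
    apply (blockA mu hmu (a i) (w i)).mp
    intro bi
    set b : PiLp 2 (fun _ : Fin p => EuclideanSpace ℝ (Fin d)) :=
      WithLp.toLp 2 (fun j => if j = i then bi else a j) with hb
    have hbi : b i = bi := if_pos rfl
    have hbj : ∀ j, j ≠ i → b j = a j := fun j hj => if_neg hj
    have hdiff : ∑ j, (‖b j‖ - ‖a j‖) = ‖bi‖ - ‖a i‖ := by
      rw [Finset.sum_eq_single i
        (fun j _ hj => by rw [hbj j hj, sub_self])
        (fun hni => absurd (Finset.mem_univ i) hni), hbi]
    have hip : ⟪w, b - a⟫ = ⟪w i, bi - a i⟫ := by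
      rw [PiLp.inner_apply]
      rw [Finset.sum_eq_single i
        (fun j _ hj => by rw [PiLp.sub_apply, hbj j hj, sub_self, inner_zero_right])
        (fun hni => absurd (Finset.mem_univ i) hni), PiLp.sub_apply, hbi]
    have hs := h b
    rw [hip] at hs
    have hsum : ∑ j, ‖b j‖ = ∑ j, ‖a j‖ + (‖bi‖ - ‖a i‖) := by
      have := Finset.sum_sub_distrib (s := Finset.univ)
        (f := fun j => ‖b j‖) (g := fun j => ‖a j‖)
      rw [this] at hdiff
      linarith
    have hmul : mu * ∑ j, ‖b j‖ = mu * ∑ j, ‖a j‖ + (mu * ‖bi‖ - mu * ‖a i‖) := by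
      rw [hsum]; ring
    rw [hmul] at hs
    linarith
end

section
/- Let (û, ŵ, v̂, ẑ) be a fixed point of the GBPDNA iteration and let (uⁿ, wⁿ, vⁿ, zⁿ) be generated by one step of the iteration. Let L : ℝ^N → ℝ^N and B : (ℝ^d)^p → (ℝ^d)^p be invertible linear maps with LᵀL = I − KᵀK and BᵀB = I − AAᵀ. Then ‖L(u^{n+1} − û)‖² + ‖B(w^{n+1} − ŵ)‖² + θ⁻¹‖v^{n+1} − v̂‖² + ‖z^{n+1} − ẑ‖² ≤ ‖L(uⁿ − û)‖² + ‖B(wⁿ − ŵ)‖² + θ⁻¹‖vⁿ − v̂‖² + ‖zⁿ − ẑ‖² − ‖L(u^{n+1} − uⁿ)‖² − ‖B(w^{n+1} − wⁿ)‖² − ‖ẑ − zⁿ − K(û − u^{n+1})‖². -/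
open scoped RealInnerProductSpace
open Filter Topology

set_option maxHeartbeats 1000000

lemma qproj_mem {m : ℕ} (y : EuclideanSpace ℝ (Fin m)) {eps : ℝ} (heps : 0 ≤ eps)
    (x : EuclideanSpace ℝ (Fin m)) : ‖Qproj y eps x - y‖ ≤ eps := by
  unfold Qproj; split_ifs with h
  · have hr : 0 < ‖x - y‖ := lt_of_le_of_lt heps h
    rw [add_sub_cancel_left, norm_smul, Real.norm_eq_abs,
      abs_of_nonneg (div_nonneg heps hr.le), div_mul_cancel₀ _ hr.ne']
  · linarith [not_lt.1 h]

lemma qproj_vi {m : ℕ} (y : EuclideanSpace ℝ (Fin m)) {eps : ℝ} (heps : 0 ≤ eps)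
    (x c : EuclideanSpace ℝ (Fin m)) (hc : ‖c - y‖ ≤ eps) :
    ⟪x - Qproj y eps x, c - Qproj y eps x⟫ ≤ 0 := by
  unfold Qproj; split_ifs with h
  · have hr : 0 < ‖x - y‖ := lt_of_le_of_lt heps h
    have h1 : x - (y + (eps / ‖x - y‖) • (x - y)) = (1 - eps / ‖x - y‖) • (x - y) := by
      module
    have h2 : c - (y + (eps / ‖x - y‖) • (x - y)) = (c - y) - (eps / ‖x - y‖) • (x - y) := by
      module
    rw [h1, h2, real_inner_smul_left, inner_sub_right, real_inner_smul_right,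
      real_inner_self_eq_norm_sq]
    have hip : ⟪x - y, c - y⟫ ≤ ‖x - y‖ * eps :=
      le_trans (real_inner_le_norm _ _) (by nlinarith [norm_nonneg (x - y)])
    have ht2 : eps / ‖x - y‖ * ‖x - y‖ ^ 2 = eps * ‖x - y‖ := by
      field_simp
    have h4 : 0 ≤ 1 - eps / ‖x - y‖ := by
      have := (div_le_one hr).2 h.le; linarith
    nlinarith
  · simp

lemma pproj_eq {d p : ℕ} (lam : ℝ)
    (w : PiLp 2 (fun _ : Fin p => EuclideanSpace ℝ (Fin d))) (i : Fin p) :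
    Pproj lam w i = Qproj 0 lam (w i) := by
  simp [Pproj, Qproj]

lemma main_ineq {E F G : Type*}
    [NormedAddCommGroup E] [InnerProductSpace ℝ E] [CompleteSpace E]
    [NormedAddCommGroup F] [InnerProductSpace ℝ F] [CompleteSpace F]
    [NormedAddCommGroup G] [InnerProductSpace ℝ G] [CompleteSpace G]
    (K : E →L[ℝ] F) (A : E →L[ℝ] G) (L : E →L[ℝ] E) (B : G →L[ℝ] G)
    (hLn : ∀ x, ‖L x‖ ^ 2 = ‖x‖ ^ 2 - ‖K x‖ ^ 2)
    (hBn : ∀ ξ, ‖B ξ‖ ^ 2 = ‖ξ‖ ^ 2 - ‖A.adjoint ξ‖ ^ 2)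
    (θ : ℝ) (hθ0 : 0 < θ) (hθ1 : θ ≤ 1)
    (a a' : E) (b b' : G) (c c' e e' : F)
    (hR1 : a - a' = K.adjoint (c + K a - e) + A.adjoint b')
    (hR2 : c' = c + θ • (K a' - e'))
    (hW : 0 ≤ ⟪b - b' + A (a' + A.adjoint (b' - b)), b'⟫)
    (hZ : 0 ≤ ⟪K a' + c - e', e'⟫) :
    ‖L a'‖ ^ 2 + ‖B b'‖ ^ 2 + θ⁻¹ * ‖c'‖ ^ 2 + ‖e'‖ ^ 2 ≤
      ‖L a‖ ^ 2 + ‖B b‖ ^ 2 + θ⁻¹ * ‖c‖ ^ 2 + ‖e‖ ^ 2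
        - ‖L (a - a')‖ ^ 2 - ‖B (b - b')‖ ^ 2 - ‖K a' - e‖ ^ 2 := by
  have t0 : θ ≠ 0 := ne_of_gt hθ0
  rw [hLn a', hLn a, hLn (a - a'), hBn b', hBn b, hBn (b - b')]
  have E1a : ‖a‖ ^ 2 = ‖a - a'‖ ^ 2 + 2 * ⟪a - a', a'⟫ + ‖a'‖ ^ 2 := by
    have h := norm_add_sq_real (a - a') a'
    simpa using h
  have E1b : ‖K a‖ ^ 2 = ‖K (a - a')‖ ^ 2 + 2 * ⟪K a - K a', K a'⟫ + ‖K a'‖ ^ 2 := by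
    have h := norm_add_sq_real (K a - K a') (K a')
    rw [map_sub]
    simpa using h
  have E1c : ⟪a - a', a'⟫ = ⟪c, K a'⟫ + ⟪K a, K a'⟫ - ⟪K a', e⟫ + ⟪b', A a'⟫ := by
    rw [hR1, inner_add_left, ContinuousLinearMap.adjoint_inner_left,
      ContinuousLinearMap.adjoint_inner_left, inner_sub_left, inner_add_left,
      real_inner_comm (K a') e]
  have E1d : ⟪K a - K a', K a'⟫ = ⟪K a, K a'⟫ - ‖K a'‖ ^ 2 := by
    rw [inner_sub_left, real_inner_self_eq_norm_sq]
  have E2a : ‖b‖ ^ 2 = ‖b - b'‖ ^ 2 + 2 * ⟪b - b', b'⟫ + ‖b'‖ ^ 2 := by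
    have h := norm_add_sq_real (b - b') b'
    simpa using h
  have E2b : ‖A.adjoint b‖ ^ 2 = ‖A.adjoint (b - b')‖ ^ 2
      + 2 * ⟪A.adjoint (b - b'), A.adjoint b'⟫ + ‖A.adjoint b'‖ ^ 2 := by
    have h := norm_add_sq_real (A.adjoint b - A.adjoint b') (A.adjoint b')
    rw [map_sub]
    simpa using h
  have hW' : 0 ≤ ⟪b - b', b'⟫ + ⟪b', A a'⟫ - ⟪A.adjoint (b - b'), A.adjoint b'⟫ := by
    have h := hW
    rw [map_add, inner_add_left, inner_add_left] at h
    have c1 : ⟪A a', b'⟫ = ⟪b', A a'⟫ := real_inner_comm b' (A a')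
    have c2 : ⟪A (A.adjoint (b' - b)), b'⟫ = -⟪A.adjoint (b - b'), A.adjoint b'⟫ := by
      rw [show b' - b = -(b - b') from by abel, map_neg, map_neg, inner_neg_left,
        ← ContinuousLinearMap.adjoint_inner_right]
    rw [c1, c2] at h
    linarith
  have E3 : θ⁻¹ * ‖c'‖ ^ 2 = θ⁻¹ * ‖c‖ ^ 2 + 2 * (⟪c, K a'⟫ - ⟪c, e'⟫)
      + θ * ‖K a' - e'‖ ^ 2 := by
    rw [hR2, norm_add_sq_real, real_inner_smul_right, inner_sub_right, norm_smul,
      Real.norm_eq_abs, abs_of_pos hθ0, mul_pow]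
    field_simp
  have E4 : ‖K a' - e‖ ^ 2 = ‖K a'‖ ^ 2 - 2 * ⟪K a', e⟫ + ‖e‖ ^ 2 := norm_sub_sq_real _ _
  have E5 : ‖K a' - e'‖ ^ 2 = ‖K a'‖ ^ 2 - 2 * ⟪K a', e'⟫ + ‖e'‖ ^ 2 := norm_sub_sq_real _ _
  have hZ' : 0 ≤ ⟪K a', e'⟫ + ⟪c, e'⟫ - ‖e'‖ ^ 2 := by
    have h := hZ
    rw [inner_sub_left, inner_add_left, real_inner_self_eq_norm_sq] at h
    linarith
  have hPos : 0 ≤ (1 - θ) * ‖K a' - e'‖ ^ 2 :=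
    mul_nonneg (by linarith) (sq_nonneg _)
  linarith [E1a, E1b, E1c, E1d, E2a, E2b, hW', E3, E4, E5, hZ', hPos]

/-- The key one-step descent inequality in the proof of convergence of GBPDNA: with `L, B`
invertible and `LᵀL = I − KᵀK`, `BᵀB = I − AAᵀ`,
`‖L(u^{n+1}−û)‖² + ‖B(w^{n+1}−ŵ)‖² + θ⁻¹‖v^{n+1}−v̂‖² + ‖z^{n+1}−ẑ‖²` decreases by at least
`‖L(u^{n+1}−uⁿ)‖² + ‖B(w^{n+1}−wⁿ)‖² + ‖ẑ−zⁿ−K(û−u^{n+1})‖²`. -/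
theorem stmt5 {N m p d : ℕ}
    (K : EuclideanSpace ℝ (Fin N) →L[ℝ] EuclideanSpace ℝ (Fin m))
    (A : EuclideanSpace ℝ (Fin N) →L[ℝ] PiLp 2 (fun _ : Fin p => EuclideanSpace ℝ (Fin d)))
    (hK : ‖K‖ < 1) (hA : ‖A‖ < 1)
    (y : EuclideanSpace ℝ (Fin m)) (eps : ℝ) (heps : 0 ≤ eps) (mu : ℝ) (hmu : 0 < mu)
    (θ : ℝ) (hθ0 : 0 < θ) (hθ1 : θ ≤ 1)
    (L : EuclideanSpace ℝ (Fin N) →L[ℝ] EuclideanSpace ℝ (Fin N))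
    (B : PiLp 2 (fun _ : Fin p => EuclideanSpace ℝ (Fin d)) →L[ℝ]
      PiLp 2 (fun _ : Fin p => EuclideanSpace ℝ (Fin d)))
    (hLbij : Function.Bijective L) (hBbij : Function.Bijective B)
    (hL : L.adjoint.comp L = ContinuousLinearMap.id ℝ _ - K.adjoint.comp K)
    (hB : B.adjoint.comp B = ContinuousLinearMap.id ℝ _ - A.comp A.adjoint)
    (un ubarnp1 unp1 : EuclideanSpace ℝ (Fin N))
    (wn wnp1 : PiLp 2 (fun _ : Fin p => EuclideanSpace ℝ (Fin d)))
    (vn vnp1 zn znp1 : EuclideanSpace ℝ (Fin m))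
    (hubar : ubarnp1 = un - K.adjoint (vn + K un - zn) - A.adjoint wn)
    (hw : wnp1 = Pproj mu (wn + A ubarnp1))
    (hu : unp1 = un - K.adjoint (vn + K un - zn) - A.adjoint wnp1)
    (hz : znp1 = Qproj y eps (K unp1 + vn))
    (hv : vnp1 = vn + θ • (K unp1 - znp1))
    (uh : EuclideanSpace ℝ (Fin N))
    (wh : PiLp 2 (fun _ : Fin p => EuclideanSpace ℝ (Fin d)))
    (vh zh : EuclideanSpace ℝ (Fin m))
    (hfw : wh = Pproj mu (wh + A uh))
    (hfu : K.adjoint (vh + K uh - zh) + A.adjoint wh = 0)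
    (hfz : zh = Qproj y eps (K uh + vh))
    (hfv : K uh = zh)
    :
    ‖L (unp1 - uh)‖ ^ 2 + ‖B (wnp1 - wh)‖ ^ 2 + θ⁻¹ * ‖vnp1 - vh‖ ^ 2 + ‖znp1 - zh‖ ^ 2 ≤
      ‖L (un - uh)‖ ^ 2 + ‖B (wn - wh)‖ ^ 2 + θ⁻¹ * ‖vn - vh‖ ^ 2 + ‖zn - zh‖ ^ 2
        - ‖L (unp1 - un)‖ ^ 2 - ‖B (wnp1 - wn)‖ ^ 2 - ‖zh - zn - K (uh - unp1)‖ ^ 2 := by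
  -- norm identities from hL, hB
  have hLn : ∀ x, ‖L x‖ ^ 2 = ‖x‖ ^ 2 - ‖K x‖ ^ 2 := by
    intro x
    calc ‖L x‖ ^ 2 = ⟪L x, L x⟫ := (real_inner_self_eq_norm_sq _).symm
      _ = ⟪(L.adjoint.comp L) x, x⟫ := by
          rw [ContinuousLinearMap.comp_apply, ContinuousLinearMap.adjoint_inner_left]
      _ = ⟪x, x⟫ - ⟪K.adjoint (K x), x⟫ := by
          rw [hL]
          simp [ContinuousLinearMap.sub_apply, inner_sub_left]
      _ = ‖x‖ ^ 2 - ‖K x‖ ^ 2 := by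
          rw [ContinuousLinearMap.adjoint_inner_left, real_inner_self_eq_norm_sq,
            real_inner_self_eq_norm_sq]
  have hBn : ∀ ξ, ‖B ξ‖ ^ 2 = ‖ξ‖ ^ 2 - ‖A.adjoint ξ‖ ^ 2 := by
    intro ξ
    calc ‖B ξ‖ ^ 2 = ⟪B ξ, B ξ⟫ := (real_inner_self_eq_norm_sq _).symm
      _ = ⟪(B.adjoint.comp B) ξ, ξ⟫ := by
          rw [ContinuousLinearMap.comp_apply, ContinuousLinearMap.adjoint_inner_left]
      _ = ⟪ξ, ξ⟫ - ⟪A (A.adjoint ξ), ξ⟫ := by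
          rw [hB]
          simp [ContinuousLinearMap.sub_apply, inner_sub_left]
      _ = ‖ξ‖ ^ 2 - ‖A.adjoint ξ‖ ^ 2 := by
          rw [← ContinuousLinearMap.adjoint_inner_right, real_inner_self_eq_norm_sq,
            real_inner_self_eq_norm_sq]
  -- the two residual relations
  have hR1 : (un - uh) - (unp1 - uh)
      = K.adjoint ((vn - vh) + K (un - uh) - (zn - zh)) + A.adjoint (wnp1 - wh) := by
    rw [← sub_eq_zero, ← hfu, hu]
    simp only [map_add, map_sub]
    abel
  have hR2 : vnp1 - vh = (vn - vh) + θ • (K (unp1 - uh) - (znp1 - zh)) := by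
    rw [hv]
    simp only [map_sub, hfv]
    module
  -- projection inequalities for the w-update
  have e1 : ∀ i, wh i = Qproj 0 mu ((wh + A uh) i) := by
    intro i
    conv_lhs => rw [hfw]
    rw [pproj_eq]
  have e2 : ∀ i, wnp1 i = Qproj 0 mu ((wn + A ubarnp1) i) := by
    intro i
    conv_lhs => rw [hw]
    rw [pproj_eq]
  have hwhb : ∀ i, ‖wh i - 0‖ ≤ mu := by
    intro i; rw [e1 i]; exact qproj_mem 0 hmu.le _
  have hwnp1b : ∀ i, ‖wnp1 i - 0‖ ≤ mu := by
    intro i; rw [e2 i]; exact qproj_mem 0 hmu.le _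
  have vi1 : ∀ i, ⟪(wn + A ubarnp1) i - wnp1 i, wh i - wnp1 i⟫ ≤ 0 := by
    intro i; rw [e2 i]; exact qproj_vi 0 hmu.le _ _ (hwhb i)
  have vi2 : ∀ i, ⟪(wh + A uh) i - wh i, wnp1 i - wh i⟫ ≤ 0 := by
    intro i; rw [e1 i]; exact qproj_vi 0 hmu.le _ _ (hwnp1b i)
  have hs1 : ⟪(wn + A ubarnp1) - wnp1, wh - wnp1⟫ ≤ 0 := by
    rw [PiLp.inner_apply]
    refine Finset.sum_nonpos fun i _ => ?_
    simpa [PiLp.sub_apply, PiLp.add_apply] using vi1 i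
  have hs2 : ⟪(wh + A uh) - wh, wnp1 - wh⟫ ≤ 0 := by
    rw [PiLp.inner_apply]
    refine Finset.sum_nonpos fun i _ => ?_
    simpa [PiLp.sub_apply, PiLp.add_apply] using vi2 i
  have hbar : ubarnp1 - uh = (unp1 - uh) + A.adjoint ((wnp1 - wh) - (wn - wh)) := by
    rw [hubar, hu]
    simp only [map_add, map_sub]
    abel
  have hWv : 0 ≤ ⟪(wn - wh) - (wnp1 - wh)
      + A ((unp1 - uh) + A.adjoint ((wnp1 - wh) - (wn - wh))), wnp1 - wh⟫ := by
    have key : (wn - wh) - (wnp1 - wh) + A ((unp1 - uh) + A.adjoint ((wnp1 - wh) - (wn - wh)))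
        = ((wn + A ubarnp1) - wnp1) - ((wh + A uh) - wh) := by
      rw [← hbar]
      simp only [map_sub]
      abel
    have flip : ⟪(wn + A ubarnp1) - wnp1, wnp1 - wh⟫
        = -⟪(wn + A ubarnp1) - wnp1, wh - wnp1⟫ := by
      rw [show wnp1 - wh = -(wh - wnp1) from by abel, inner_neg_right]
    rw [key, inner_sub_left]
    linarith [hs1, hs2, flip]
  -- projection inequalities for the z-update
  have m1 : ‖znp1 - y‖ ≤ eps := by rw [hz]; exact qproj_mem y heps _
  have m2 : ‖zh - y‖ ≤ eps := by rw [hfz]; exact qproj_mem y heps _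
  have v1 : ⟪(K unp1 + vn) - znp1, zh - znp1⟫ ≤ 0 := by
    rw [hz]; exact qproj_vi y heps _ _ m2
  have v2 : ⟪(K uh + vh) - zh, znp1 - zh⟫ ≤ 0 := by
    rw [hfz]; exact qproj_vi y heps _ _ m1
  have hZv : 0 ≤ ⟪K (unp1 - uh) + (vn - vh) - (znp1 - zh), znp1 - zh⟫ := by
    have key : K (unp1 - uh) + (vn - vh) - (znp1 - zh)
        = ((K unp1 + vn) - znp1) - ((K uh + vh) - zh) := by
      simp only [map_sub]
      abel
    have flip : ⟪(K unp1 + vn) - znp1, znp1 - zh⟫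
        = -⟪(K unp1 + vn) - znp1, zh - znp1⟫ := by
      rw [show znp1 - zh = -(zh - znp1) from by abel, inner_neg_right]
    rw [key, inner_sub_left]
    linarith [v1, v2, flip]
  have key := main_ineq K A L B hLn hBn θ hθ0 hθ1 (un - uh) (unp1 - uh) (wn - wh) (wnp1 - wh)
    (vn - vh) (vnp1 - vh) (zn - zh) (znp1 - zh) hR1 hR2 hWv hZv
  have n1 : ‖L ((un - uh) - (unp1 - uh))‖ = ‖L (unp1 - un)‖ := by
    rw [show (un - uh) - (unp1 - uh) = -(unp1 - un) from by abel, map_neg, norm_neg]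
  have n2 : ‖B ((wn - wh) - (wnp1 - wh))‖ = ‖B (wnp1 - wn)‖ := by
    rw [show (wn - wh) - (wnp1 - wh) = -(wnp1 - wn) from by abel, map_neg, norm_neg]
  have n3 : ‖K (unp1 - uh) - (zn - zh)‖ = ‖zh - zn - K (uh - unp1)‖ := by
    rw [show K (unp1 - uh) - (zn - zh) = zh - zn - K (uh - unp1) from by
      simp only [map_sub]; abel]
  rw [n1, n2, n3] at key
  exact key
end

section
/- Assume the fixed-point system admits a solution, and let (uⁿ, wⁿ, vⁿ, zⁿ)_{n≥0} be generated by the GBPDNA iteration from any starting point. If a subsequence (u^{n_j}, w^{n_j}, v^{n_j}, z^{n_j}) converges to a point (u†, w†, v†, z†), then (u†, w†, v†, z†) is a fixed point of the iteration, i.e. it satisfies w† = P_μ(w† + Au†), Kᵀ(v† + Ku† − z†) + Aᵀw† = 0, z† = Q_{y,ε}(Ku† + v†) and Ku† = z†. -/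
open scoped RealInnerProductSpace
open Filter Topology

/-! ### Auxiliary facts about projections onto closed balls -/

section BallProj

variable {E : Type*} [NormedAddCommGroup E] [InnerProductSpace ℝ E]

/-- Projection onto the closed ball of radius `r` centered at `c`. -/
noncomputable def ballProj (c : E) (r : ℝ) (x : E) : E :=
  if r < ‖x - c‖ then c + (r / ‖x - c‖) • (x - c) else x

lemma Pproj_apply {d p : ℕ} (lam : ℝ)
    (w : PiLp 2 (fun _ : Fin p => EuclideanSpace ℝ (Fin d))) (i : Fin p) :
    Pproj lam w i = ballProj 0 lam (w i) := by
  simp [Pproj, ballProj]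

lemma Qproj_eq {m : ℕ} (y : EuclideanSpace ℝ (Fin m)) (eps : ℝ) :
    Qproj y eps = ballProj y eps := rfl

lemma ballProj_mem (c : E) {r : ℝ} (hr : 0 ≤ r) (x : E) : ‖ballProj c r x - c‖ ≤ r := by
  unfold ballProj
  split_ifs with h
  · have hx : 0 < ‖x - c‖ := lt_of_le_of_lt hr h
    rw [add_sub_cancel_left, norm_smul, Real.norm_of_nonneg (div_nonneg hr hx.le),
      div_mul_cancel₀ _ hx.ne']
  · linarith [not_lt.mp h]

lemma ballProj_vi (c : E) {r : ℝ} (hr : 0 ≤ r) (x z : E) (hz : ‖z - c‖ ≤ r) :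
    ⟪x - ballProj c r x, z - ballProj c r x⟫ ≤ 0 := by
  unfold ballProj
  split_ifs with h
  · have hx : 0 < ‖x - c‖ := lt_of_le_of_lt hr h
    have e1 : x - (c + (r / ‖x - c‖) • (x - c)) = (1 - r / ‖x - c‖) • (x - c) := by
      rw [sub_smul, one_smul]; abel
    have e2 : z - (c + (r / ‖x - c‖) • (x - c)) = (z - c) - (r / ‖x - c‖) • (x - c) := by
      abel
    rw [e1, e2, real_inner_smul_left, inner_sub_right, real_inner_smul_right,
      real_inner_self_eq_norm_sq]
    have h1 : ⟪x - c, z - c⟫ ≤ ‖x - c‖ * r := by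
      calc ⟪x - c, z - c⟫ ≤ ‖x - c‖ * ‖z - c‖ := real_inner_le_norm _ _
        _ ≤ ‖x - c‖ * r := mul_le_mul_of_nonneg_left hz hx.le
    have h3 : 0 ≤ 1 - r / ‖x - c‖ := by
      rw [sub_nonneg, div_le_one hx]; exact h.le
    have h4 : r / ‖x - c‖ * ‖x - c‖ ^ 2 = ‖x - c‖ * r := by
      field_simp
    apply mul_nonpos_of_nonneg_of_nonpos h3
    rw [h4]; linarith
  · simp

lemma ballProj_mono (c : E) {r : ℝ} (hr : 0 ≤ r) (x x' : E) :
    0 ≤ ⟪(x - x') - (ballProj c r x - ballProj c r x'), ballProj c r x - ballProj c r x'⟫ := by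
  have h1 := ballProj_vi c hr x (ballProj c r x') (ballProj_mem c hr x')
  have h2 := ballProj_vi c hr x' (ballProj c r x) (ballProj_mem c hr x)
  have e : (x - x') - (ballProj c r x - ballProj c r x')
      = (x - ballProj c r x) - (x' - ballProj c r x') := by abel
  rw [e, inner_sub_left]
  have h1' : ⟪x - ballProj c r x, ballProj c r x - ballProj c r x'⟫
      = -⟪x - ballProj c r x, ballProj c r x' - ballProj c r x⟫ := by
    rw [← inner_neg_right]; congr 1; abel
  linarith

/-- From the monotonicity inequality, 1-Lipschitz-ness. -/
lemma norm_le_of_inner_aux {xq q : E} (h : 0 ≤ ⟪xq - q, q⟫) : ‖q‖ ≤ ‖xq‖ := by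
  rw [inner_sub_left, real_inner_self_eq_norm_sq] at h
  have h2 : ⟪xq, q⟫ ≤ ‖xq‖ * ‖q‖ := real_inner_le_norm _ _
  rcases (norm_nonneg q).eq_or_lt with h0 | h0
  · rw [← h0]; exact norm_nonneg _
  · nlinarith

lemma ballProj_lip (c : E) {r : ℝ} (hr : 0 ≤ r) (x x' : E) :
    ‖ballProj c r x - ballProj c r x'‖ ≤ ‖x - x'‖ :=
  norm_le_of_inner_aux (ballProj_mono c hr x x')

end BallProj

/-! ### Inner-product identities and the one-step Lyapunov estimate -/

section Helpers
variable {E : Type*} [NormedAddCommGroup E] [InnerProductSpace ℝ E]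

lemma inner_id (x y : E) : 2*⟪x - y, y⟫ = ‖x‖^2 - ‖y‖^2 - ‖x - y‖^2 := by
  have h := norm_sub_sq_real x y
  have h2 : ⟪x - y, y⟫ = ⟪x, y⟫ - ⟪y, y⟫ := inner_sub_left x y y
  rw [real_inner_self_eq_norm_sq] at h2
  linarith

lemma inner_id2 (x y : E) : 2*⟪y, x - y⟫ = ‖x‖^2 - ‖y‖^2 - ‖x - y‖^2 := by
  rw [real_inner_comm]; exact inner_id x y

lemma inner_id3 (x y : E) : 2*⟪y, y - x⟫ = ‖y‖^2 - ‖x‖^2 + ‖x - y‖^2 := by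
  have h := inner_id2 x y
  have h2 : ⟪y, y - x⟫ = -⟪y, x - y⟫ := by rw [← inner_neg_right]; congr 1; abel
  linarith

lemma sq_tendsto_zero {g : ℕ → ℝ} (hg : ∀ n, 0 ≤ g n)
    (h : Tendsto (fun n => g n ^ 2) atTop (𝓝 0)) : Tendsto g atTop (𝓝 0) := by
  have h2 : Tendsto (fun n => Real.sqrt (g n ^ 2)) atTop (𝓝 (Real.sqrt 0)) :=
    (Real.continuous_sqrt.tendsto 0).comp h
  rw [Real.sqrt_zero] at h2
  exact h2.congr fun n => Real.sqrt_sq (hg n)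

lemma tendsto_clm_comp {E F : Type*} [NormedAddCommGroup E] [NormedAddCommGroup F]
    [NormedSpace ℝ E] [NormedSpace ℝ F] (T : E →L[ℝ] F) {g : ℕ → E} {a : E}
    (hg : Tendsto g atTop (𝓝 a)) : Tendsto (fun j => T (g j)) atTop (𝓝 (T a)) :=
  (T.continuous.tendsto a).comp hg

lemma tendsto_lip_comp {E : Type*} [NormedAddCommGroup E] (P : E → E)
    (hP : ∀ x x', ‖P x - P x'‖ ≤ ‖x - x'‖) {g : ℕ → E} {a : E}
    (hg : Tendsto g atTop (𝓝 a)) : Tendsto (fun j => P (g j)) atTop (𝓝 (P a)) := by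
  rw [tendsto_iff_norm_sub_tendsto_zero] at hg ⊢
  exact squeeze_zero (fun j => norm_nonneg _) (fun j => hP (g j) a) hg

end Helpers

section KeyStep

variable {U M W : Type*} [NormedAddCommGroup U] [InnerProductSpace ℝ U]
  [NormedAddCommGroup M] [InnerProductSpace ℝ M]
  [NormedAddCommGroup W] [InnerProductSpace ℝ W]

set_option maxHeartbeats 2000000 in
/-- One-step Lyapunov decrease for the GBPDNA iteration, in delta (distance to fixed point)
form. -/
lemma key_step_s9 (K : U →L[ℝ] M) (K' : M →L[ℝ] U) (A : U →L[ℝ] W) (A' : W →L[ℝ] U)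
    (hKadj : ∀ (x : M) (uu : U), ⟪K' x, uu⟫ = ⟪x, K uu⟫)
    (hAadj : ∀ (x : W) (uu : U), ⟪A' x, uu⟫ = ⟪x, A uu⟫)
    (k α β : ℝ) (hk0 : 0 ≤ k) (hα0 : 0 ≤ α) (hβ : 1 ≤ β)
    (hKn : ∀ x : U, ‖K x‖ ≤ k * ‖x‖) (hA'n : ∀ x : W, ‖A' x‖ ≤ α * ‖x‖)
    (a a' ub : U) (b b' : W) (cm c c' ρ : M)
    (h1 : a' = a - K' (c + β • (c - cm)) - A' b')
    (h2 : ub = a - K' (c + β • (c - cm)) - A' b)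
    (h3 : 0 ≤ ⟪(b + A ub) - b', b'⟫)
    (h4 : 0 ≤ ⟪ρ, (K a' + c) - ρ⟫)
    (h5 : ρ = c + β • (c' - c)) :
    ‖a'‖^2 + (‖b'‖^2 - ‖A' b'‖^2) + β*‖c'‖^2 - 2*β*⟪c' - c, K a'⟫ + β^2*k*‖c' - c‖^2
      + (1-k)*‖a' - a‖^2 + (1-α^2)*‖b' - b‖^2 + β^2*(1-k)*‖c' - c‖^2
    ≤ ‖a‖^2 + (‖b‖^2 - ‖A' b‖^2) + β*‖c‖^2 - 2*β*⟪c - cm, K a⟫ + β^2*k*‖c - cm‖^2 := by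
  -- the main equality (EQ)
  have e1 : a - a' = K' (c + β • (c - cm)) + A' b' := by rw [h1]; abel
  have s1 : ⟪a - a', a'⟫ = ⟪c + β • (c - cm), K a'⟫ + ⟪b', A a'⟫ := by
    rw [e1, inner_add_left, hKadj, hAadj]
  have L4eq : ⟪c + β • (c - cm), K a'⟫
      = ⟪ρ, K a'⟫ - β*⟪c' - c, K a'⟫ + β*⟪c - cm, K a⟫ + β*⟪c - cm, K (a' - a)⟫ := by
    rw [h5]
    simp only [map_sub, inner_add_left, inner_sub_left, inner_sub_right, real_inner_smul_left]
    ring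
  have SEQ : ⟪a - a', a'⟫
      = ⟪ρ, K a'⟫ - β*⟪c' - c, K a'⟫ + β*⟪c - cm, K a⟫ + β*⟪c - cm, K (a' - a)⟫ + ⟪b', A a'⟫ := by
    rw [s1, L4eq]
  have F1 : 2*⟪a - a', a'⟫ = ‖a‖^2 - ‖a'‖^2 - ‖a - a'‖^2 := inner_id a a'
  -- (B2)
  have hub : ub = a' + (A' b' - A' b) := by rw [h1, h2]; abel
  have t3 : ⟪(b + A ub) - b', b'⟫
      = ⟪b - b', b'⟫ + ⟪b', A a'⟫ + ⟪A' b', A' b' - A' b⟫ := by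
    have e : (b + A ub) - b' = (b - b') + A ub := by abel
    rw [e, inner_add_left]
    have e2 : ⟪A ub, b'⟫ = ⟪A' b', ub⟫ := by rw [real_inner_comm, hAadj]
    rw [e2, hub, inner_add_right, hAadj]
    ring
  have idb : 2*⟪b - b', b'⟫ = ‖b‖^2 - ‖b'‖^2 - ‖b - b'‖^2 := inner_id b b'
  have idab : 2*⟪A' b', A' b' - A' b⟫ = ‖A' b'‖^2 - ‖A' b‖^2 + ‖A' b - A' b'‖^2 :=
    inner_id3 (A' b) (A' b')
  have habound : ‖A' b - A' b'‖^2 ≤ α^2 * ‖b' - b‖^2 := by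
    have h := hA'n (b - b')
    rw [map_sub] at h
    have hb : ‖b - b'‖ = ‖b' - b‖ := norm_sub_rev _ _
    rw [hb] at h
    nlinarith [norm_nonneg (A' b - A' b'), norm_nonneg (b' - b)]
  have hbrev : ‖b - b'‖^2 = ‖b' - b‖^2 := by rw [norm_sub_rev]
  have B2 : 2*⟪b', A a'⟫
      ≥ (‖b'‖^2 - ‖A' b'‖^2) - (‖b‖^2 - ‖A' b‖^2) + (1-α^2)*‖b' - b‖^2 := by
    linarith [h3, t3, idb, idab, habound, hbrev]
  -- (B1)
  have t4a : (K a' + c) - ρ = K a' - β • (c' - c) := by rw [h5]; abel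
  have t4b : ⟪ρ, c' - c⟫ = ⟪c, c' - c⟫ + β*‖c' - c‖^2 := by
    rw [h5, inner_add_left, real_inner_smul_left, real_inner_self_eq_norm_sq]
  have t4 : ⟪ρ, (K a' + c) - ρ⟫ = ⟪ρ, K a'⟫ - β*⟪c, c' - c⟫ - β^2*‖c' - c‖^2 := by
    rw [t4a, inner_sub_right, real_inner_smul_right, t4b]
    ring
  have B1 : 2*⟪ρ, K a'⟫ ≥ 2*β*⟪c, c' - c⟫ + 2*β^2*‖c' - c‖^2 := by
    linarith [h4, t4]
  have id_cβ : 2*β*⟪c, c' - c⟫ = β*‖c'‖^2 - β*‖c‖^2 - β*‖c' - c‖^2 := by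
    linear_combination β * inner_id2 c' c
  -- (L5 / Young)
  have hx4 : ⟪c - cm, K (a' - a)⟫ ≥ -(‖c - cm‖ * (k * ‖a' - a‖)) := by
    have h1' := abs_real_inner_le_norm (c - cm) (K (a' - a))
    have h2' := hKn (a' - a)
    have h3' := neg_abs_le (⟪c - cm, K (a' - a)⟫ : ℝ)
    nlinarith [norm_nonneg (c - cm)]
  have L5 : 2*β*⟪c - cm, K (a' - a)⟫ ≥ -(β^2*k*‖c - cm‖^2) - k*‖a' - a‖^2 := by
    have hβ0 : (0:ℝ) ≤ 2*β := by linarith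
    have step1 : 2*β*(-(‖c - cm‖ * (k * ‖a' - a‖))) ≤ 2*β*⟪c - cm, K (a' - a)⟫ :=
      mul_le_mul_of_nonneg_left hx4 hβ0
    nlinarith [mul_nonneg hk0 (sq_nonneg (β*‖c - cm‖ - ‖a' - a‖))]
  -- extra pure-β fact
  have F8 : β*‖c' - c‖^2 ≤ β^2*‖c' - c‖^2 := by
    have hb2 : β ≤ β^2 := by nlinarith
    exact mul_le_mul_of_nonneg_right hb2 (sq_nonneg _)
  have hrev : ‖a - a'‖^2 = ‖a' - a‖^2 := by rw [norm_sub_rev]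
  linarith [F1, SEQ, B1, id_cβ, B2, L5, F8, hrev]

lemma key_nonneg (K : U →L[ℝ] M) (A' : W →L[ℝ] U) (k α β : ℝ)
    (hk0 : 0 ≤ k) (hk1 : k ≤ 1) (hα1 : α ≤ 1) (hβ0 : 0 ≤ β)
    (hKn : ∀ x : U, ‖K x‖ ≤ k * ‖x‖) (hA'n : ∀ x : W, ‖A' x‖ ≤ α * ‖x‖)
    (a : U) (b : W) (c dc : M) :
    0 ≤ ‖a‖^2 + (‖b‖^2 - ‖A' b‖^2) + β*‖c‖^2 - 2*β*⟪dc, K a⟫ + β^2*k*‖dc‖^2 := by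
  have hx : ⟪dc, K a⟫ ≤ ‖dc‖ * (k * ‖a‖) :=
    (real_inner_le_norm _ _).trans (mul_le_mul_of_nonneg_left (hKn a) (norm_nonneg dc))
  have h2β : 2*β*⟪dc, K a⟫ ≤ 2*β*(‖dc‖ * (k * ‖a‖)) :=
    mul_le_mul_of_nonneg_left hx (by linarith)
  have hY : 0 ≤ k * (β*‖dc‖ - ‖a‖)^2 := mul_nonneg hk0 (sq_nonneg _)
  have hA1 : ‖A' b‖ ≤ ‖b‖ := by
    refine (hA'n b).trans ?_
    have : 0 ≤ (1 - α) * ‖b‖ := mul_nonneg (by linarith) (norm_nonneg b)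
    linarith
  have hG : ‖A' b‖^2 ≤ ‖b‖^2 := by nlinarith [norm_nonneg (A' b), norm_nonneg b]
  have h1k : 0 ≤ (1-k) * ‖a‖^2 := mul_nonneg (by linarith) (sq_nonneg _)
  have hβc : 0 ≤ β * ‖c‖^2 := mul_nonneg hβ0 (sq_nonneg _)
  nlinarith [h2β, hY, hG, h1k, hβc]

end KeyStep

set_option maxHeartbeats 4000000 in
/-- If the fixed-point system admits a solution and a subsequence of the GBPDNA iterates
converges to `(u†, w†, v†, z†)`, then `(u†, w†, v†, z†)` is a fixed point of the iteration. -/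
theorem stmt9 {N m p d : ℕ}
    (K : EuclideanSpace ℝ (Fin N) →L[ℝ] EuclideanSpace ℝ (Fin m))
    (A : EuclideanSpace ℝ (Fin N) →L[ℝ] PiLp 2 (fun _ : Fin p => EuclideanSpace ℝ (Fin d)))
    (hK : ‖K‖ < 1) (hA : ‖A‖ < 1)
    (y : EuclideanSpace ℝ (Fin m)) (eps : ℝ) (heps : 0 ≤ eps) (mu : ℝ) (hmu : 0 < mu)
    (θ : ℝ) (hθ0 : 0 < θ) (hθ1 : θ ≤ 1)
    (u ubar : ℕ → EuclideanSpace ℝ (Fin N))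
    (w : ℕ → PiLp 2 (fun _ : Fin p => EuclideanSpace ℝ (Fin d)))
    (v z : ℕ → EuclideanSpace ℝ (Fin m))
    (hubar : ∀ n, ubar (n + 1) = u n - K.adjoint (v n + K (u n) - z n) - A.adjoint (w n))
    (hw : ∀ n, w (n + 1) = Pproj mu (w n + A (ubar (n + 1))))
    (hu : ∀ n, u (n + 1) = u n - K.adjoint (v n + K (u n) - z n) - A.adjoint (w (n + 1)))
    (hz : ∀ n, z (n + 1) = Qproj y eps (K (u (n + 1)) + v n))
    (hv : ∀ n, v (n + 1) = v n + θ • (K (u (n + 1)) - z (n + 1)))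
    (uh : EuclideanSpace ℝ (Fin N))
    (wh : PiLp 2 (fun _ : Fin p => EuclideanSpace ℝ (Fin d)))
    (vh zh : EuclideanSpace ℝ (Fin m))
    (hfw : wh = Pproj mu (wh + A uh))
    (hfu : K.adjoint (vh + K uh - zh) + A.adjoint wh = 0)
    (hfz : zh = Qproj y eps (K uh + vh))
    (hfv : K uh = zh)
    (φ : ℕ → ℕ) (hφ : StrictMono φ)
    (ud : EuclideanSpace ℝ (Fin N))
    (wd : PiLp 2 (fun _ : Fin p => EuclideanSpace ℝ (Fin d)))
    (vd zd : EuclideanSpace ℝ (Fin m))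
    (hulim : Tendsto (fun j => u (φ j)) atTop (𝓝 ud))
    (hwlim : Tendsto (fun j => w (φ j)) atTop (𝓝 wd))
    (hvlim : Tendsto (fun j => v (φ j)) atTop (𝓝 vd))
    (hzlim : Tendsto (fun j => z (φ j)) atTop (𝓝 zd)) :
    wd = Pproj mu (wd + A ud) ∧
      K.adjoint (vd + K ud - zd) + A.adjoint wd = 0 ∧
      zd = Qproj y eps (K ud + vd) ∧
      K ud = zd := by
  -- basic scalar facts
  have hk0 : (0:ℝ) ≤ ‖K‖ := norm_nonneg K
  have hα0 : (0:ℝ) ≤ ‖A‖ := norm_nonneg A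
  have hβ : (1:ℝ) ≤ θ⁻¹ := by
    have h := one_div_le_one_div_of_le hθ0 hθ1
    simpa using h
  -- adjoint facts
  have hadjK : ∀ (x : EuclideanSpace ℝ (Fin m)) (uu : EuclideanSpace ℝ (Fin N)),
      ⟪K.adjoint x, uu⟫ = ⟪x, K uu⟫ := fun x uu => ContinuousLinearMap.adjoint_inner_left K uu x
  have hadjA : ∀ (x : PiLp 2 (fun _ : Fin p => EuclideanSpace ℝ (Fin d)))
      (uu : EuclideanSpace ℝ (Fin N)),
      ⟪A.adjoint x, uu⟫ = ⟪x, A uu⟫ := fun x uu => ContinuousLinearMap.adjoint_inner_left A uu x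
  have hKn : ∀ x : EuclideanSpace ℝ (Fin N), ‖K x‖ ≤ ‖K‖ * ‖x‖ := fun x => K.le_opNorm x
  have hA'norm : ‖A.adjoint‖ = ‖A‖ := by
    rw [LinearIsometryEquiv.norm_map]
  have hA'n : ∀ x : PiLp 2 (fun _ : Fin p => EuclideanSpace ℝ (Fin d)),
      ‖A.adjoint x‖ ≤ ‖A‖ * ‖x‖ := fun x => by
    calc ‖A.adjoint x‖ ≤ ‖A.adjoint‖ * ‖x‖ := (A.adjoint).le_opNorm x
      _ = ‖A‖ * ‖x‖ := by rw [hA'norm]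
  -- projection facts
  have Pmono : ∀ x x' : PiLp 2 (fun _ : Fin p => EuclideanSpace ℝ (Fin d)),
      0 ≤ ⟪(x - x') - (Pproj mu x - Pproj mu x'), Pproj mu x - Pproj mu x'⟫ := by
    intro x x'
    rw [PiLp.inner_apply]
    refine Finset.sum_nonneg fun i _ => ?_
    simp only [PiLp.sub_apply, Pproj_apply]
    exact ballProj_mono 0 hmu.le (x i) (x' i)
  have Plip : ∀ x x' : PiLp 2 (fun _ : Fin p => EuclideanSpace ℝ (Fin d)),
      ‖Pproj mu x - Pproj mu x'‖ ≤ ‖x - x'‖ := fun x x' =>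
    norm_le_of_inner_aux (Pmono x x')
  have Qmono : ∀ x x' : EuclideanSpace ℝ (Fin m),
      0 ≤ ⟪(x - x') - (Qproj y eps x - Qproj y eps x'), Qproj y eps x - Qproj y eps x'⟫ := by
    intro x x'
    rw [Qproj_eq]
    exact ballProj_mono y heps x x'
  have Qlip : ∀ x x' : EuclideanSpace ℝ (Fin m),
      ‖Qproj y eps x - Qproj y eps x'‖ ≤ ‖x - x'‖ := fun x x' =>
    norm_le_of_inner_aux (Qmono x x')
  -- basic iteration reformulations
  have hsm : ∀ n, θ⁻¹ • (v (n+1) - v n) = K (u (n+1)) - z (n+1) := by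
    intro n
    rw [hv n, add_sub_cancel_left]
    exact inv_smul_smul₀ hθ0.ne' _
  have hfu' : K.adjoint (vh + K uh - zh) = -A.adjoint wh := eq_neg_of_add_eq_zero_left hfu
  -- the Lyapunov function
  obtain ⟨Gf, hGf⟩ : ∃ Gf : ℕ → ℝ, ∀ n, Gf n =
      ‖u (n+1) - uh‖^2 + (‖w (n+1) - wh‖^2 - ‖A.adjoint (w (n+1) - wh)‖^2)
        + θ⁻¹*‖v (n+1) - vh‖^2 - 2*θ⁻¹*⟪v (n+1) - v n, K (u (n+1) - uh)⟫
        + θ⁻¹^2*‖K‖*‖v (n+1) - v n‖^2 :=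
    ⟨_, fun n => rfl⟩
  -- the one-step decrease
  have hstep : ∀ j : ℕ,
      Gf (j+1) + (1-‖K‖)*‖u (j+1+1) - u (j+1)‖^2 + (1-‖A‖^2)*‖w (j+1+1) - w (j+1)‖^2
        + θ⁻¹^2*(1-‖K‖)*‖v (j+1+1) - v (j+1)‖^2 ≤ Gf j := by
    intro j
    have hsm1 : θ⁻¹ • (v (j+1) - v j) = K (u (j+1)) - z (j+1) := hsm j
    have hsm2 : θ⁻¹ • (v (j+1+1) - v (j+1)) = K (u (j+1+1)) - z (j+1+1) := hsm (j+1)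
    have h5 : (K (u (j+1+1) - uh) + (v (j+1) - vh)) - (z (j+1+1) - zh)
        = (v (j+1) - vh) + θ⁻¹ • ((v (j+1+1) - vh) - (v (j+1) - vh)) := by
      have e : (v (j+1+1) - vh) - (v (j+1) - vh) = v (j+1+1) - v (j+1) := by abel
      rw [e, hsm2, map_sub, hfv]
      abel
    have hxi : (v (j+1) - vh) + θ⁻¹ • ((v (j+1) - vh) - (v j - vh))
        = (v (j+1) + K (u (j+1)) - z (j+1)) - (vh + K uh - zh) := by
      have e : (v (j+1) - vh) - (v j - vh) = v (j+1) - v j := by abel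
      rw [e, hsm1, hfv]
      abel
    have h1 : u (j+1+1) - uh = (u (j+1) - uh)
        - K.adjoint ((v (j+1) - vh) + θ⁻¹ • ((v (j+1) - vh) - (v j - vh)))
        - A.adjoint (w (j+1+1) - wh) := by
      rw [hxi, map_sub K.adjoint, map_sub A.adjoint, hu (j+1), hfu']
      abel
    have h2 : ubar (j+1+1) - uh = (u (j+1) - uh)
        - K.adjoint ((v (j+1) - vh) + θ⁻¹ • ((v (j+1) - vh) - (v j - vh)))
        - A.adjoint (w (j+1) - wh) := by
      rw [hxi, map_sub K.adjoint, map_sub A.adjoint, hubar (j+1), hfu']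
      abel
    have h3 : 0 ≤ ⟪((w (j+1) - wh) + A (ubar (j+1+1) - uh)) - (w (j+1+1) - wh),
        w (j+1+1) - wh⟫ := by
      have hmono := Pmono (w (j+1) + A (ubar (j+1+1))) (wh + A uh)
      rw [← hw (j+1), ← hfw] at hmono
      have e : (w (j+1) + A (ubar (j+1+1))) - (wh + A uh)
          = (w (j+1) - wh) + A (ubar (j+1+1) - uh) := by
        rw [map_sub]; abel
      rw [e] at hmono
      exact hmono
    have h4 : 0 ≤ ⟪(K (u (j+1+1) - uh) + (v (j+1) - vh)) - (z (j+1+1) - zh),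
        (K (u (j+1+1) - uh) + (v (j+1) - vh))
          - ((K (u (j+1+1) - uh) + (v (j+1) - vh)) - (z (j+1+1) - zh))⟫ := by
      have hmono := Qmono (K (u (j+1+1)) + v (j+1)) (K uh + vh)
      rw [← hz (j+1), ← hfz] at hmono
      have e1 : (K (u (j+1+1)) + v (j+1)) - (K uh + vh)
          = K (u (j+1+1) - uh) + (v (j+1) - vh) := by
        rw [map_sub]; abel
      rw [e1] at hmono
      have e2 : (K (u (j+1+1) - uh) + (v (j+1) - vh))
          - ((K (u (j+1+1) - uh) + (v (j+1) - vh)) - (z (j+1+1) - zh)) = z (j+1+1) - zh := by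
        abel
      rw [e2]
      exact hmono
    have hks := key_step_s9 K K.adjoint A A.adjoint hadjK hadjA ‖K‖ ‖A‖ θ⁻¹ hk0 hα0 hβ hKn hA'n
      (u (j+1) - uh) (u (j+1+1) - uh) (ubar (j+1+1) - uh) (w (j+1) - wh) (w (j+1+1) - wh)
      (v j - vh) (v (j+1) - vh) (v (j+1+1) - vh)
      ((K (u (j+1+1) - uh) + (v (j+1) - vh)) - (z (j+1+1) - zh))
      h1 h2 h3 h4 h5
    simp only [sub_sub_sub_cancel_right] at hks
    rw [hGf (j+1), hGf j]
    linarith [hks]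
  -- nonnegativity of the Lyapunov function
  have hnn : ∀ j, 0 ≤ Gf j := by
    intro j
    rw [hGf j]
    exact key_nonneg K A.adjoint ‖K‖ ‖A‖ θ⁻¹ hk0 hK.le hA.le (by linarith) hKn hA'n
      (u (j+1) - uh) (w (j+1) - wh) (v (j+1) - vh) (v (j+1) - v j)
  -- residual coefficients are positive
  have hcu : (0:ℝ) < 1 - ‖K‖ := by linarith
  have hcw : (0:ℝ) < 1 - ‖A‖^2 := by nlinarith
  have hcv : (0:ℝ) < θ⁻¹^2*(1-‖K‖) := by
    have : (0:ℝ) < θ⁻¹ := by linarith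
    positivity
  -- the Lyapunov sequence converges
  have hanti : Antitone Gf := by
    apply antitone_nat_of_succ_le
    intro j
    have h := hstep j
    have r1 : 0 ≤ (1-‖K‖)*‖u (j+1+1) - u (j+1)‖^2 := mul_nonneg hcu.le (sq_nonneg _)
    have r2 : 0 ≤ (1-‖A‖^2)*‖w (j+1+1) - w (j+1)‖^2 := mul_nonneg hcw.le (sq_nonneg _)
    have r3 : 0 ≤ θ⁻¹^2*(1-‖K‖)*‖v (j+1+1) - v (j+1)‖^2 := mul_nonneg hcv.le (sq_nonneg _)
    linarith
  have htendG : Tendsto Gf atTop (𝓝 (⨅ j, Gf j)) := by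
    apply tendsto_atTop_ciInf hanti
    exact ⟨0, by rintro x ⟨j, rfl⟩; exact hnn j⟩
  have htendG1 : Tendsto (fun j => Gf (j+1)) atTop (𝓝 (⨅ j, Gf j)) :=
    htendG.comp (tendsto_add_atTop_nat 1)
  have hdiff0 : Tendsto (fun j => Gf j - Gf (j+1)) atTop (𝓝 0) := by
    have h := htendG.sub htendG1
    simpa using h
  -- each residual tends to zero (squared norms)
  have hresid : ∀ (c : ℝ) (hc : 0 < c) (r : ℕ → ℝ),
      (∀ j, 0 ≤ r j) → (∀ j, c * r j ≤ Gf j - Gf (j+1)) →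
      Tendsto r atTop (𝓝 0) := by
    intro c hc r hr0 hrb
    apply squeeze_zero hr0 (g := fun j => c⁻¹ * (Gf j - Gf (j+1)))
    · intro j
      have h := hrb j
      calc r j = c⁻¹ * (c * r j) := by field_simp
        _ ≤ c⁻¹ * (Gf j - Gf (j+1)) := by
            exact mul_le_mul_of_nonneg_left h (inv_nonneg.mpr hc.le)
    · have h := hdiff0.const_mul c⁻¹
      simpa using h
  have hru2 : Tendsto (fun j => ‖u (j+1+1) - u (j+1)‖^2) atTop (𝓝 0) := by
    refine hresid _ hcu _ (fun j => sq_nonneg _) fun j => ?_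
    have h := hstep j
    have r2 : 0 ≤ (1-‖A‖^2)*‖w (j+1+1) - w (j+1)‖^2 := mul_nonneg hcw.le (sq_nonneg _)
    have r3 : 0 ≤ θ⁻¹^2*(1-‖K‖)*‖v (j+1+1) - v (j+1)‖^2 := mul_nonneg hcv.le (sq_nonneg _)
    linarith
  have hrw2 : Tendsto (fun j => ‖w (j+1+1) - w (j+1)‖^2) atTop (𝓝 0) := by
    refine hresid _ hcw _ (fun j => sq_nonneg _) fun j => ?_
    have h := hstep j
    have r1 : 0 ≤ (1-‖K‖)*‖u (j+1+1) - u (j+1)‖^2 := mul_nonneg hcu.le (sq_nonneg _)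
    have r3 : 0 ≤ θ⁻¹^2*(1-‖K‖)*‖v (j+1+1) - v (j+1)‖^2 := mul_nonneg hcv.le (sq_nonneg _)
    linarith
  have hrv2 : Tendsto (fun j => ‖v (j+1+1) - v (j+1)‖^2) atTop (𝓝 0) := by
    refine hresid _ hcv _ (fun j => sq_nonneg _) fun j => ?_
    have h := hstep j
    have r1 : 0 ≤ (1-‖K‖)*‖u (j+1+1) - u (j+1)‖^2 := mul_nonneg hcu.le (sq_nonneg _)
    have r2 : 0 ≤ (1-‖A‖^2)*‖w (j+1+1) - w (j+1)‖^2 := mul_nonneg hcw.le (sq_nonneg _)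
    linarith
  -- norms of consecutive differences tend to zero (full sequences)
  have hnu : Tendsto (fun n => ‖u (n+1) - u n‖) atTop (𝓝 0) :=
    (tendsto_add_atTop_iff_nat 1).mp (sq_tendsto_zero (fun j => norm_nonneg _) hru2)
  have hnw : Tendsto (fun n => ‖w (n+1) - w n‖) atTop (𝓝 0) :=
    (tendsto_add_atTop_iff_nat 1).mp (sq_tendsto_zero (fun j => norm_nonneg _) hrw2)
  have hnv : Tendsto (fun n => ‖v (n+1) - v n‖) atTop (𝓝 0) :=
    (tendsto_add_atTop_iff_nat 1).mp (sq_tendsto_zero (fun j => norm_nonneg _) hrv2)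
  -- z-differences also tend to zero
  have hnz : Tendsto (fun n => ‖z (n+1) - z n‖) atTop (𝓝 0) := by
    apply (tendsto_add_atTop_iff_nat 1).mp
    apply squeeze_zero (fun n => norm_nonneg _)
      (g := fun n => ‖K‖*‖u (n+1+1) - u (n+1)‖ + ‖v (n+1) - v n‖)
    · intro n
      calc ‖z (n+1+1) - z (n+1)‖
          = ‖Qproj y eps (K (u (n+1+1)) + v (n+1)) - Qproj y eps (K (u (n+1)) + v n)‖ := by
            rw [hz (n+1), hz n]
        _ ≤ ‖(K (u (n+1+1)) + v (n+1)) - (K (u (n+1)) + v n)‖ := Qlip _ _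
        _ = ‖K (u (n+1+1) - u (n+1)) + (v (n+1) - v n)‖ := by
            congr 1
            rw [map_sub]
            abel
        _ ≤ ‖K (u (n+1+1) - u (n+1))‖ + ‖v (n+1) - v n‖ := norm_add_le _ _
        _ ≤ ‖K‖*‖u (n+1+1) - u (n+1)‖ + ‖v (n+1) - v n‖ :=
            add_le_add (K.le_opNorm _) le_rfl
    · have h1 : Tendsto (fun n => ‖u (n+1+1) - u (n+1)‖) atTop (𝓝 0) :=
        hnu.comp (tendsto_add_atTop_nat 1)
      have h := (h1.const_mul ‖K‖).add hnv
      simpa using h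
  -- vector differences tend to zero
  have hdu : Tendsto (fun n => u (n+1) - u n) atTop (𝓝 0) :=
    tendsto_zero_iff_norm_tendsto_zero.mpr hnu
  have hdw : Tendsto (fun n => w (n+1) - w n) atTop (𝓝 0) :=
    tendsto_zero_iff_norm_tendsto_zero.mpr hnw
  have hdv : Tendsto (fun n => v (n+1) - v n) atTop (𝓝 0) :=
    tendsto_zero_iff_norm_tendsto_zero.mpr hnv
  have hdz : Tendsto (fun n => z (n+1) - z n) atTop (𝓝 0) :=
    tendsto_zero_iff_norm_tendsto_zero.mpr hnz
  -- along the subsequence, shifted sequences have the same limits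
  have hφt : Tendsto φ atTop atTop := hφ.tendsto_atTop
  have hulim1 : Tendsto (fun j => u (φ j + 1)) atTop (𝓝 ud) := by
    have h := hulim.add (hdu.comp hφt)
    simpa using h
  have hwlim1 : Tendsto (fun j => w (φ j + 1)) atTop (𝓝 wd) := by
    have h := hwlim.add (hdw.comp hφt)
    simpa using h
  have hvlim1 : Tendsto (fun j => v (φ j + 1)) atTop (𝓝 vd) := by
    have h := hvlim.add (hdv.comp hφt)
    simpa using h
  have hzlim1 : Tendsto (fun j => z (φ j + 1)) atTop (𝓝 zd) := by
    have h := hzlim.add (hdz.comp hφt)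
    simpa using h
  -- conclusion 2
  have hR2 : Tendsto (fun j => u (φ j) - K.adjoint (v (φ j) + K (u (φ j)) - z (φ j))
      - A.adjoint (w (φ j + 1))) atTop
      (𝓝 (ud - K.adjoint (vd + K ud - zd) - A.adjoint wd)) :=
    (hulim.sub (tendsto_clm_comp K.adjoint
      ((hvlim.add (tendsto_clm_comp K hulim)).sub hzlim))).sub
      (tendsto_clm_comp A.adjoint hwlim1)
  have heq2 : ud = ud - K.adjoint (vd + K ud - zd) - A.adjoint wd :=
    tendsto_nhds_unique (hulim1.congr fun j => hu (φ j)) hR2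
  have conclusion2 : K.adjoint (vd + K ud - zd) + A.adjoint wd = 0 := by
    rw [sub_sub] at heq2
    exact sub_eq_self.mp heq2.symm
  -- conclusion 1
  have hub_eq : ud - K.adjoint (vd + K ud - zd) - A.adjoint wd = ud := by
    rw [sub_sub, conclusion2, sub_zero]
  have hublim : Tendsto (fun j => ubar (φ j + 1)) atTop (𝓝 ud) := by
    have h : Tendsto (fun j => u (φ j) - K.adjoint (v (φ j) + K (u (φ j)) - z (φ j))
        - A.adjoint (w (φ j))) atTop
        (𝓝 (ud - K.adjoint (vd + K ud - zd) - A.adjoint wd)) :=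
      (hulim.sub (tendsto_clm_comp K.adjoint
        ((hvlim.add (tendsto_clm_comp K hulim)).sub hzlim))).sub
        (tendsto_clm_comp A.adjoint hwlim)
    rw [hub_eq] at h
    exact h.congr fun j => (hubar (φ j)).symm
  have hargw : Tendsto (fun j => w (φ j) + A (ubar (φ j + 1))) atTop (𝓝 (wd + A ud)) :=
    hwlim.add (tendsto_clm_comp A hublim)
  have conclusion1 : wd = Pproj mu (wd + A ud) :=
    tendsto_nhds_unique (hwlim1.congr fun j => hw (φ j)) (tendsto_lip_comp _ Plip hargw)
  -- conclusion 3
  have hargz : Tendsto (fun j => K (u (φ j + 1)) + v (φ j)) atTop (𝓝 (K ud + vd)) :=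
    (tendsto_clm_comp K hulim1).add hvlim
  have conclusion3 : zd = Qproj y eps (K ud + vd) :=
    tendsto_nhds_unique (hzlim1.congr fun j => hz (φ j)) (tendsto_lip_comp _ Qlip hargz)
  -- conclusion 4
  have hR4 : Tendsto (fun j => v (φ j) + θ • (K (u (φ j + 1)) - z (φ j + 1))) atTop
      (𝓝 (vd + θ • (K ud - zd))) :=
    hvlim.add (((tendsto_clm_comp K hulim1).sub hzlim1).const_smul θ)
  have heq4 : vd = vd + θ • (K ud - zd) :=
    tendsto_nhds_unique (hvlim1.congr fun j => hv (φ j)) hR4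
  have h50 : θ • (K ud - zd) = 0 := (left_eq_add.mp heq4)
  have conclusion4 : K ud = zd := by
    rcases smul_eq_zero.mp h50 with h | h
    · exact absurd h hθ0.ne'
    · exact sub_eq_zero.mp h
  exact ⟨conclusion1, conclusion2, conclusion3, conclusion4⟩
end

section
/- Let (û, ŵ, v̂, ẑ) be a fixed point of the GBPDNA iteration and let (uⁿ, wⁿ, vⁿ, zⁿ) be generated by one step of the iteration. Then ‖u^{n+1} − û‖² ≤ ‖uⁿ − û‖² − ‖u^{n+1} − uⁿ‖² + ‖K(u^{n+1} − uⁿ)‖² − ‖K(uⁿ − û)‖² − ‖ẑ − zⁿ − K(û − u^{n+1})‖² + ‖zⁿ − ẑ‖² − 2⟨û − u^{n+1}, −Kᵀ(vⁿ − v̂) − Aᵀ(w^{n+1} − ŵ)⟩. -/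
open scoped RealInnerProductSpace
open Filter Topology

set_option maxHeartbeats 1000000 in
/-- One-step estimate for the `u`-variable (inequality (tempu) of the paper). -/
theorem stmt16 {N m p d : ℕ}
    (K : EuclideanSpace ℝ (Fin N) →L[ℝ] EuclideanSpace ℝ (Fin m))
    (A : EuclideanSpace ℝ (Fin N) →L[ℝ] PiLp 2 (fun _ : Fin p => EuclideanSpace ℝ (Fin d)))
    (hK : ‖K‖ < 1) (hA : ‖A‖ < 1)
    (y : EuclideanSpace ℝ (Fin m)) (eps : ℝ) (heps : 0 ≤ eps) (mu : ℝ) (hmu : 0 < mu)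
    (θ : ℝ) (hθ0 : 0 < θ) (hθ1 : θ ≤ 1)
    (un ubarnp1 unp1 : EuclideanSpace ℝ (Fin N))
    (wn wnp1 : PiLp 2 (fun _ : Fin p => EuclideanSpace ℝ (Fin d)))
    (vn vnp1 zn znp1 : EuclideanSpace ℝ (Fin m))
    (hubar : ubarnp1 = un - K.adjoint (vn + K un - zn) - A.adjoint wn)
    (hw : wnp1 = Pproj mu (wn + A ubarnp1))
    (hu : unp1 = un - K.adjoint (vn + K un - zn) - A.adjoint wnp1)
    (hz : znp1 = Qproj y eps (K unp1 + vn))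
    (hv : vnp1 = vn + θ • (K unp1 - znp1))
    (uh : EuclideanSpace ℝ (Fin N))
    (wh : PiLp 2 (fun _ : Fin p => EuclideanSpace ℝ (Fin d)))
    (vh zh : EuclideanSpace ℝ (Fin m))
    (hfw : wh = Pproj mu (wh + A uh))
    (hfu : K.adjoint (vh + K uh - zh) + A.adjoint wh = 0)
    (hfz : zh = Qproj y eps (K uh + vh))
    (hfv : K uh = zh)
    :
    ‖unp1 - uh‖ ^ 2 ≤
      ‖un - uh‖ ^ 2 - ‖unp1 - un‖ ^ 2 + ‖K (unp1 - un)‖ ^ 2 - ‖K (un - uh)‖ ^ 2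
        - ‖zh - zn - K (uh - unp1)‖ ^ 2 + ‖zn - zh‖ ^ 2
        - 2 * ⟪uh - unp1, -K.adjoint (vn - vh) - A.adjoint (wnp1 - wh)⟫ := by
  have h0 : K.adjoint vh + A.adjoint wh = 0 := by
    have h := hfu
    rw [hfv] at h
    simpa using h
  have hvh : K.adjoint vh = -A.adjoint wh := eq_neg_of_add_eq_zero_left h0
  have key : un - unp1 = K.adjoint (vn - vh) + K.adjoint (K (un - uh))
      + K.adjoint (zh - zn) + A.adjoint (wnp1 - wh) := by
    rw [hu]
    simp only [map_sub, map_add, hfv]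
    rw [hvh]
    abel
  have hB : ⟪uh - unp1, un - unp1⟫
      = ⟪uh - unp1, K.adjoint (vn - vh) + A.adjoint (wnp1 - wh)⟫
        + ⟪K (uh - unp1), K (un - uh)⟫ + ⟪K (uh - unp1), zh - zn⟫ := by
    rw [key]
    simp only [inner_add_right, ContinuousLinearMap.adjoint_inner_right]
    ring
  have hA2 : ‖un - uh‖ ^ 2
      = ‖unp1 - uh‖ ^ 2 - 2 * ⟪unp1 - uh, unp1 - un⟫ + ‖unp1 - un‖ ^ 2 := by
    have h := norm_sub_sq_real (unp1 - uh) (unp1 - un)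
    rw [show (unp1 - uh) - (unp1 - un) = un - uh from by abel] at h
    exact h
  have hD : ‖K (unp1 - un)‖ ^ 2
      = ‖K (uh - unp1)‖ ^ 2 + 2 * ⟪K (uh - unp1), K (un - uh)⟫ + ‖K (un - uh)‖ ^ 2 := by
    have h := norm_add_sq_real (K (uh - unp1)) (K (un - uh))
    have h2 : K (uh - unp1) + K (un - uh) = -(K (unp1 - un)) := by
      simp only [map_sub]; abel
    rw [h2, norm_neg] at h
    exact h
  have hE : ‖zh - zn - K (uh - unp1)‖ ^ 2
      = ‖zn - zh‖ ^ 2 - 2 * ⟪K (uh - unp1), zh - zn⟫ + ‖K (uh - unp1)‖ ^ 2 := by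
    have h := norm_sub_sq_real (zh - zn) (K (uh - unp1))
    rw [real_inner_comm, norm_sub_rev zh zn] at h
    exact h
  have hC : ⟪uh - unp1, -K.adjoint (vn - vh) - A.adjoint (wnp1 - wh)⟫
      = -⟪uh - unp1, K.adjoint (vn - vh) + A.adjoint (wnp1 - wh)⟫ := by
    rw [show -K.adjoint (vn - vh) - A.adjoint (wnp1 - wh)
        = -(K.adjoint (vn - vh) + A.adjoint (wnp1 - wh)) from by abel, inner_neg_right]
  have hcomm : ⟪unp1 - uh, unp1 - un⟫ = ⟪uh - unp1, un - unp1⟫ := by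
    rw [show uh - unp1 = -(unp1 - uh) from by abel,
      show un - unp1 = -(unp1 - un) from by abel, inner_neg_neg]
  linarith [hA2, hB, hC, hD, hE, hcomm]
end

section
/- Let (û, ŵ, v̂, ẑ) be a fixed point of the GBPDNA iteration and let (uⁿ, wⁿ, vⁿ, zⁿ) be generated by one step of the iteration. Then 0 ≤ −‖z^{n+1} − ẑ‖² − θ⁻²‖v^{n+1} − vⁿ‖² + ‖K(u^{n+1} − û)‖² + 2⟨z^{n+1} − ẑ, vⁿ − v̂⟩. -/
open scoped RealInnerProductSpace
open Filter Topology

lemma Qproj_mem {m : ℕ} (y : EuclideanSpace ℝ (Fin m)) (eps : ℝ) (heps : 0 ≤ eps)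
    (v : EuclideanSpace ℝ (Fin m)) : ‖Qproj y eps v - y‖ ≤ eps := by
  unfold Qproj
  by_cases h : eps < ‖v - y‖
  · rw [if_pos h]
    have hr : 0 < ‖v - y‖ := lt_of_le_of_lt heps h
    rw [add_sub_cancel_left, norm_smul, Real.norm_eq_abs,
      abs_of_nonneg (div_nonneg heps hr.le), div_mul_cancel₀ _ hr.ne']
  · rw [if_neg h]; linarith [not_lt.mp h]

lemma Qproj_inner {m : ℕ} (y : EuclideanSpace ℝ (Fin m)) (eps : ℝ) (heps : 0 ≤ eps)
    (v c : EuclideanSpace ℝ (Fin m)) (hc : ‖c - y‖ ≤ eps) :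
    ⟪v - Qproj y eps v, c - Qproj y eps v⟫ ≤ 0 := by
  unfold Qproj
  by_cases h : eps < ‖v - y‖
  · rw [if_pos h]
    set r := ‖v - y‖ with hrdef
    have hr : 0 < r := lt_of_le_of_lt heps h
    have h1 : v - (y + (eps / r) • (v - y)) = (1 - eps / r) • (v - y) := by
      rw [sub_smul, one_smul]; abel
    have h2 : c - (y + (eps / r) • (v - y)) = (c - y) - (eps / r) • (v - y) := by
      abel
    rw [h1, h2, inner_smul_left, inner_sub_right, inner_smul_right,
      real_inner_self_eq_norm_sq]
    have hip : ⟪v - y, c - y⟫ ≤ r * eps := by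
      calc ⟪v - y, c - y⟫ ≤ ‖v - y‖ * ‖c - y‖ := real_inner_le_norm _ _
        _ ≤ r * eps := by
          apply mul_le_mul_of_nonneg_left hc hr.le
    have he : eps / r * r ^ 2 = eps * r := by
      field_simp
    have hf : (0:ℝ) ≤ 1 - eps / r := by
      rw [sub_nonneg, div_le_one hr]; exact h.le
    have : ⟪v - y, c - y⟫ - eps / r * r ^ 2 ≤ 0 := by
      rw [he]; nlinarith
    simp only [RCLike.conj_to_real]
    nlinarith
  · rw [if_neg h]
    simp

/-- One-step estimate for the `z`-variable (inequality (tempz) of the paper). -/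
theorem stmt17 {N m p d : ℕ}
    (K : EuclideanSpace ℝ (Fin N) →L[ℝ] EuclideanSpace ℝ (Fin m))
    (A : EuclideanSpace ℝ (Fin N) →L[ℝ] PiLp 2 (fun _ : Fin p => EuclideanSpace ℝ (Fin d)))
    (hK : ‖K‖ < 1) (hA : ‖A‖ < 1)
    (y : EuclideanSpace ℝ (Fin m)) (eps : ℝ) (heps : 0 ≤ eps) (mu : ℝ) (hmu : 0 < mu)
    (θ : ℝ) (hθ0 : 0 < θ) (hθ1 : θ ≤ 1)
    (un ubarnp1 unp1 : EuclideanSpace ℝ (Fin N))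
    (wn wnp1 : PiLp 2 (fun _ : Fin p => EuclideanSpace ℝ (Fin d)))
    (vn vnp1 zn znp1 : EuclideanSpace ℝ (Fin m))
    (hubar : ubarnp1 = un - K.adjoint (vn + K un - zn) - A.adjoint wn)
    (hw : wnp1 = Pproj mu (wn + A ubarnp1))
    (hu : unp1 = un - K.adjoint (vn + K un - zn) - A.adjoint wnp1)
    (hz : znp1 = Qproj y eps (K unp1 + vn))
    (hv : vnp1 = vn + θ • (K unp1 - znp1))
    (uh : EuclideanSpace ℝ (Fin N))
    (wh : PiLp 2 (fun _ : Fin p => EuclideanSpace ℝ (Fin d)))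
    (vh zh : EuclideanSpace ℝ (Fin m))
    (hfw : wh = Pproj mu (wh + A uh))
    (hfu : K.adjoint (vh + K uh - zh) + A.adjoint wh = 0)
    (hfz : zh = Qproj y eps (K uh + vh))
    (hfv : K uh = zh)
    :
    0 ≤ -‖znp1 - zh‖ ^ 2 - θ⁻¹ ^ 2 * ‖vnp1 - vn‖ ^ 2 + ‖K (unp1 - uh)‖ ^ 2
        + 2 * ⟪znp1 - zh, vn - vh⟫ := by
  -- abbreviations
  set X := K (unp1 - uh) with hX
  set Z := znp1 - zh with hZ
  have ha : znp1 = Qproj y eps (K unp1 + vn) := hz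
  have hb : zh = Qproj y eps (K uh + vh) := hfz
  have hmem1 : ‖zh - y‖ ≤ eps := by rw [hb]; exact Qproj_mem y eps heps _
  have hmem2 : ‖znp1 - y‖ ≤ eps := by rw [ha]; exact Qproj_mem y eps heps _
  have hi1 : ⟪(K unp1 + vn) - znp1, zh - znp1⟫ ≤ 0 := by
    rw [ha]; exact Qproj_inner y eps heps _ _ hmem1
  have hi2 : ⟪(K uh + vh) - zh, znp1 - zh⟫ ≤ 0 := by
    rw [hb]; exact Qproj_inner y eps heps _ _ hmem2
  -- firm nonexpansiveness
  have hfirm : ‖Z‖ ^ 2 ≤ ⟪Z, X + (vn - vh)⟫ := by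
    have e1 : (K unp1 + vn) - znp1 = (X + (vn - vh)) - Z + ((K uh + vh) - zh) := by
      rw [hX, hZ, map_sub]; abel
    have e2 : zh - znp1 = -(znp1 - zh) := by abel
    rw [e1, e2, inner_neg_right, inner_add_left, inner_sub_left] at hi1
    have h3 := add_nonpos hi1 hi2
    simp only [← hZ] at h3
    rw [← real_inner_self_eq_norm_sq]
    linarith [real_inner_comm Z (X + (vn - vh)), h3]
  have hvv : θ⁻¹ ^ 2 * ‖vnp1 - vn‖ ^ 2 = ‖X - Z‖ ^ 2 := by
    have : vnp1 - vn = θ • (K unp1 - znp1) := by rw [hv]; abel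
    have hXZ : K unp1 - znp1 = X - Z := by rw [hX, hZ, map_sub, hfv]; abel
    rw [this, hXZ, norm_smul, Real.norm_eq_abs, mul_pow, sq_abs]
    field_simp
  have hexp : ‖X - Z‖ ^ 2 = ‖X‖ ^ 2 - 2 * ⟪X, Z⟫ + ‖Z‖ ^ 2 := by
    rw [norm_sub_sq_real]
  have hinn : ⟪Z, X + (vn - vh)⟫ = ⟪Z, X⟫ + ⟪Z, vn - vh⟫ := inner_add_right _ _ _
  have hcomm : ⟪X, Z⟫ = ⟪Z, X⟫ := real_inner_comm _ _
  rw [hvv, hexp]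
  rw [hinn] at hfirm
  linarith [hcomm ▸ hfirm]
end
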